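/- arXiv:1608.01532 — 6 statements merged into one kernel-verified Lean document; each statement's English description precedes it below -/
import Mathlib

section
/- For a connected weighted graph with Laplacian L = D − A, degree vector d, and m = ι_n'd, the generalized inverse L* := D^{−1/2}(D^{−1/2} L D^{−1/2})† D^{−1/2} satisfies L* L = I_n − m^{−1} ι_n d'. -/
open Matrix BigOperators

open Classical in
/-- Moore–Penrose pseudoinverse of a real matrix (defined via the four Penrose conditions,
which determine it uniquely; it always exists for real matrices). -/
noncomputable def mpinv {m n : ℕ} (M : Matrix (Fin m) (Fin n) ℝ) : Matrix (Fin n) (Fin m) ℝ :=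
  if h : ∃ N : Matrix (Fin n) (Fin m) ℝ,
      M * N * M = M ∧ N * M * N = N ∧ (M * N)ᵀ = M * N ∧ (N * M)ᵀ = N * M
  then h.choose else 0

/-- The diagonal matrix `D^{-1/2}` for `D = diag d`. -/
noncomputable def dhalfInv {n : ℕ} (d : Fin n → ℝ) : Matrix (Fin n) (Fin n) ℝ :=
  Matrix.diagonal fun i => 1 / Real.sqrt (d i)

/-- The generalized inverse `M* = D^{-1/2} (D^{-1/2} M D^{-1/2})† D^{-1/2}`. -/
noncomputable def gstar {n : ℕ} (d : Fin n → ℝ) (M : Matrix (Fin n) (Fin n) ℝ) :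
    Matrix (Fin n) (Fin n) ℝ :=
  dhalfInv d * mpinv (dhalfInv d * M * dhalfInv d) * dhalfInv d

/-- Connectivity of the weighted graph with adjacency matrix `A`. -/
def Conn {n : ℕ} (A : Matrix (Fin n) (Fin n) ℝ) : Prop :=
  ∀ i j : Fin n, Relation.ReflTransGen (fun a b => A a b ≠ 0) i j

lemma penrose_unique {m n : ℕ} (M : Matrix (Fin m) (Fin n) ℝ)
    (N1 N2 : Matrix (Fin n) (Fin m) ℝ)
    (h11 : M * N1 * M = M) (h12 : N1 * M * N1 = N1)
    (h13 : (M * N1)ᵀ = M * N1) (h14 : (N1 * M)ᵀ = N1 * M)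
    (h21 : M * N2 * M = M) (h22 : N2 * M * N2 = N2)
    (h23 : (M * N2)ᵀ = M * N2) (h24 : (N2 * M)ᵀ = N2 * M) : N1 = N2 := by
  have hNM : N1 * M = N2 * M := by
    calc N1 * M = (N1 * M)ᵀ := h14.symm
    _ = Mᵀ * N1ᵀ := by rw [transpose_mul]
    _ = (M * N2 * M)ᵀ * N1ᵀ := by rw [h21]
    _ = (N2 * M) * (N1 * M) := by
        rw [transpose_mul, transpose_mul, ← h24, ← h14]
        simp [Matrix.mul_assoc, transpose_mul]
    _ = N2 * (M * N1 * M) := by simp [Matrix.mul_assoc]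
    _ = N2 * M := by rw [h11]
  have hMN : M * N1 = M * N2 := by
    calc M * N1 = (M * N1)ᵀ := h13.symm
    _ = N1ᵀ * Mᵀ := by rw [transpose_mul]
    _ = N1ᵀ * (M * N2 * M)ᵀ := by rw [h21]
    _ = (M * N1) * (M * N2) := by
        rw [transpose_mul, transpose_mul, ← h13, ← h23]
        simp [Matrix.mul_assoc, transpose_mul]
    _ = (M * N1 * M) * N2 := by simp [Matrix.mul_assoc]
    _ = M * N2 := by rw [h11]
  calc N1 = N1 * M * N1 := h12.symm
  _ = N1 * (M * N2) := by rw [Matrix.mul_assoc, hMN]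
  _ = (N2 * M) * N2 := by rw [← Matrix.mul_assoc, hNM]
  _ = N2 := h22

lemma mpinv_eq {m n : ℕ} (M : Matrix (Fin m) (Fin n) ℝ) (N : Matrix (Fin n) (Fin m) ℝ)
    (h1 : M * N * M = M) (h2 : N * M * N = N)
    (h3 : (M * N)ᵀ = M * N) (h4 : (N * M)ᵀ = N * M) : mpinv M = N := by
  have hex : ∃ N' : Matrix (Fin n) (Fin m) ℝ,
      M * N' * M = M ∧ N' * M * N' = N' ∧ (M * N')ᵀ = M * N' ∧ (N' * M)ᵀ = N' * M :=
    ⟨N, h1, h2, h3, h4⟩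
  rw [mpinv, dif_pos hex]
  obtain ⟨s1, s2, s3, s4⟩ := hex.choose_spec
  exact penrose_unique M _ N s1 s2 s3 s4 h1 h2 h3 h4

lemma quad_form {n : ℕ} (A : Matrix (Fin n) (Fin n) ℝ) (hsym : Aᵀ = A)
    (d : Fin n → ℝ) (hdeg : ∀ i, d i = ∑ j, A i j) (y : Fin n → ℝ) :
    ∑ i, ∑ j, A i j * (y i - y j) ^ 2 =
      2 * (y ⬝ᵥ (Matrix.diagonal d - A) *ᵥ y) := by
  have hA : ∀ i j, A j i = A i j := fun i j => congrFun (congrFun hsym i) j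
  have e1 : ∑ i, ∑ j, A i j * y i ^ 2 = ∑ i, d i * y i ^ 2 := by
    refine Finset.sum_congr rfl fun i _ => ?_
    rw [← Finset.sum_mul, ← hdeg]
  have e2 : ∑ i, ∑ j, A i j * y j ^ 2 = ∑ i, d i * y i ^ 2 := by
    rw [Finset.sum_comm]
    refine Finset.sum_congr rfl fun j _ => ?_
    rw [← Finset.sum_mul]
    congr 1
    rw [hdeg]
    exact Finset.sum_congr rfl fun i _ => hA j i
  have expand : ∑ i, ∑ j, A i j * (y i - y j) ^ 2 =
      (∑ i, ∑ j, A i j * y i ^ 2) + (∑ i, ∑ j, A i j * y j ^ 2)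
        - 2 * (∑ i, ∑ j, A i j * (y i * y j)) := by
    rw [← Finset.sum_add_distrib, Finset.mul_sum, ← Finset.sum_sub_distrib]
    refine Finset.sum_congr rfl fun i _ => ?_
    rw [← Finset.sum_add_distrib, Finset.mul_sum, ← Finset.sum_sub_distrib]
    refine Finset.sum_congr rfl fun j _ => ?_
    ring
  have rhs : y ⬝ᵥ (Matrix.diagonal d - A) *ᵥ y =
      (∑ i, d i * y i ^ 2) - ∑ i, ∑ j, A i j * (y i * y j) := by
    rw [dotProduct, ← Finset.sum_sub_distrib]
    refine Finset.sum_congr rfl fun i _ => ?_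
    simp only [mulVec, dotProduct, Matrix.sub_apply, Matrix.diagonal_apply, Finset.mul_sum]
    rw [show (∑ j, y i * (((if i = j then d i else 0) - A i j) * y j))
        = ∑ j, ((if i = j then d i * y i ^ 2 else 0) - A i j * (y i * y j)) from
      Finset.sum_congr rfl fun j _ => by
        by_cases h : i = j
        · subst h; simp; ring
        · simp [h]; ring]
    rw [Finset.sum_sub_distrib, Finset.sum_ite_eq]
    simp
  rw [expand, e1, e2, rhs]
  ring

/-- for a connected weighted graph, `L* L = I - m⁻¹ ι d'` with `m = ι'd`. -/
theorem stmt7 {n : ℕ} (A : Matrix (Fin n) (Fin n) ℝ) (hsym : Aᵀ = A)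
    (hnn : ∀ i j, 0 ≤ A i j) (hdiag : ∀ i, A i i = 0)
    (d : Fin n → ℝ) (hdeg : ∀ i, d i = ∑ j, A i j) (hdpos : ∀ i, 0 < d i)
    (hconn : Conn A) :
    gstar d (Matrix.diagonal d - A) * (Matrix.diagonal d - A) =
      1 - (∑ i, d i)⁻¹ • vecMulVec (fun _ => (1 : ℝ)) d := by
  rcases Nat.eq_zero_or_pos n with hn | hn
  · subst hn; ext i j; exact i.elim0
  have hne : Nonempty (Fin n) := ⟨⟨0, hn⟩⟩
  set v : Fin n → ℝ := fun i => Real.sqrt (d i) with hv_def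
  have hv0 : ∀ i, 0 < v i := fun i => Real.sqrt_pos.mpr (hdpos i)
  have hvv : ∀ i, v i * v i = d i := fun i => Real.mul_self_sqrt (hdpos i).le
  set m : ℝ := ∑ i, d i with hm_def
  have hm : 0 < m := Finset.sum_pos (fun i _ => hdpos i) Finset.univ_nonempty
  set L : Matrix (Fin n) (Fin n) ℝ := Matrix.diagonal d - A with hL_def
  set dh : Matrix (Fin n) (Fin n) ℝ := dhalfInv d with hdh_def
  set dsq : Matrix (Fin n) (Fin n) ℝ := Matrix.diagonal v with hdsq_def
  set S : Matrix (Fin n) (Fin n) ℝ := dh * L * dh with hS_def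
  set P0 : Matrix (Fin n) (Fin n) ℝ := m⁻¹ • vecMulVec v v with hP0_def
  have hdh_diag : dh = Matrix.diagonal (fun i => 1 / v i) := by rw [hdh_def, dhalfInv]
  have h1 : dh * dsq = 1 := by
    rw [hdh_diag, hdsq_def, diagonal_mul_diagonal,
      show (fun i => 1 / v i * v i) = fun _ => (1 : ℝ) from
        funext fun i => one_div_mul_cancel (hv0 i).ne', diagonal_one]
  have h2 : dsq * dh = 1 := by
    rw [hdh_diag, hdsq_def, diagonal_mul_diagonal,
      show (fun i => v i * (1 / v i)) = fun _ => (1 : ℝ) from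
        funext fun i => mul_one_div_cancel (hv0 i).ne', diagonal_one]
  have hLsym : Lᵀ = L := by rw [hL_def, transpose_sub, diagonal_transpose, hsym]
  have hdhsym : dhᵀ = dh := by rw [hdh_diag, diagonal_transpose]
  have hSsym : Sᵀ = S := by
    rw [hS_def, transpose_mul, transpose_mul, hdhsym, hLsym, Matrix.mul_assoc]
  have hL1 : L *ᵥ (fun _ => (1 : ℝ)) = 0 := by
    rw [hL_def, sub_mulVec]
    funext i
    simp only [Pi.sub_apply, mulVec, dotProduct, mul_one, Pi.zero_apply,
      Matrix.diagonal_apply, Finset.sum_ite_eq, Finset.mem_univ, if_true]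
    rw [← hdeg]; ring
  have hdhv : dh *ᵥ v = fun _ => (1 : ℝ) := by
    funext i
    simp [hdh_diag, mulVec_diagonal]
    exact inv_mul_cancel₀ (hv0 i).ne'
  have hSv : S *ᵥ v = 0 := by
    rw [hS_def, ← Matrix.mulVec_mulVec, ← Matrix.mulVec_mulVec, hdhv, hL1,
      Matrix.mulVec_zero]
  have hSX : S * vecMulVec v v = 0 := by
    ext i j
    simp only [mul_apply, vecMulVec_apply, Matrix.zero_apply]
    calc ∑ k, S i k * (v k * v j) = (∑ k, S i k * v k) * v j := by
          rw [Finset.sum_mul]; exact Finset.sum_congr rfl fun k _ => by ring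
    _ = (S *ᵥ v) i * v j := rfl
    _ = 0 := by rw [hSv]; simp
  have hXS : vecMulVec v v * S = 0 := by
    have hXsym : (vecMulVec v v)ᵀ = vecMulVec v v := by
      ext i j; simp [transpose_apply, vecMulVec_apply, mul_comm]
    calc vecMulVec v v * S = (Sᵀ * (vecMulVec v v)ᵀ)ᵀ := by
          rw [← transpose_mul, transpose_transpose]
    _ = (S * vecMulVec v v)ᵀ := by rw [hSsym, hXsym]
    _ = 0 := by rw [hSX]; simp
  have hSP : S * P0 = 0 := by rw [hP0_def, Matrix.mul_smul, hSX, smul_zero]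
  have hPS : P0 * S = 0 := by rw [hP0_def, Matrix.smul_mul, hXS, smul_zero]
  have hXX : vecMulVec v v * vecMulVec v v = m • vecMulVec v v := by
    ext i j
    simp only [mul_apply, vecMulVec_apply, Matrix.smul_apply, smul_eq_mul]
    calc ∑ k, (v i * v k) * (v k * v j) = ∑ k, (v k * v k) * (v i * v j) :=
          Finset.sum_congr rfl fun k _ => by ring
    _ = (∑ k, v k * v k) * (v i * v j) := by rw [Finset.sum_mul]
    _ = m * (v i * v j) := by
          rw [hm_def]; congr 1; exact Finset.sum_congr rfl fun k _ => hvv k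
  have hPP : P0 * P0 = P0 := by
    rw [hP0_def, Matrix.smul_mul, Matrix.mul_smul, hXX, smul_smul, smul_smul,
      mul_assoc, inv_mul_cancel₀ hm.ne', mul_one]
  have hker : ∀ x : Fin n → ℝ, (S + P0) *ᵥ x = 0 → x = 0 := by
    intro x hx
    set y : Fin n → ℝ := fun i => x i / v i with hy_def
    have hxy : ∀ i, x i = y i * v i := fun i => (div_mul_cancel₀ _ (hv0 i).ne').symm
    have hdx : dh *ᵥ x = y := by
      funext i
      simp only [hdh_diag, mulVec_diagonal, hy_def]
      ring
    have hq : x ⬝ᵥ S *ᵥ x = y ⬝ᵥ L *ᵥ y := by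
      have e : S *ᵥ x = dh *ᵥ (L *ᵥ y) := by
        rw [hS_def, ← Matrix.mulVec_mulVec, ← Matrix.mulVec_mulVec, hdx]
      rw [e]
      simp only [dotProduct, hdh_diag, mulVec_diagonal, hy_def]
      exact Finset.sum_congr rfl fun i _ => by ring
    have hq2 : x ⬝ᵥ P0 *ᵥ x = m⁻¹ * (v ⬝ᵥ x) ^ 2 := by
      have inner : P0 *ᵥ x = fun i => m⁻¹ * (v i * (v ⬝ᵥ x)) := by
        funext i
        simp only [hP0_def, mulVec, dotProduct, Matrix.smul_apply, vecMulVec_apply,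
          smul_eq_mul]
        rw [Finset.mul_sum, Finset.mul_sum]
        exact Finset.sum_congr rfl fun j _ => by ring
      rw [inner]
      simp only [dotProduct]
      calc ∑ i, x i * (m⁻¹ * (v i * ∑ j, v j * x j))
          = ∑ i, m⁻¹ * ((v i * x i) * ∑ j, v j * x j) :=
            Finset.sum_congr rfl fun i _ => by ring
      _ = m⁻¹ * ((∑ i, v i * x i) * ∑ j, v j * x j) := by
            rw [← Finset.mul_sum, ← Finset.sum_mul]
      _ = m⁻¹ * (∑ i, v i * x i) ^ 2 := by ring
    have h0 : x ⬝ᵥ S *ᵥ x + m⁻¹ * (v ⬝ᵥ x) ^ 2 = 0 := by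
      rw [← hq2, ← dotProduct_add, ← Matrix.add_mulVec, hx, dotProduct_zero]
    have hsumnn : (0:ℝ) ≤ ∑ i, ∑ j, A i j * (y i - y j) ^ 2 :=
      Finset.sum_nonneg fun i _ => Finset.sum_nonneg fun j _ =>
        mul_nonneg (hnn i j) (sq_nonneg _)
    have hSx_nonneg : 0 ≤ x ⬝ᵥ S *ᵥ x := by
      rw [hq]
      have h2q := quad_form A hsym d hdeg y
      linarith
    have hP_nonneg : 0 ≤ m⁻¹ * (v ⬝ᵥ x) ^ 2 :=
      mul_nonneg (inv_nonneg.mpr hm.le) (sq_nonneg _)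
    have hSx0 : x ⬝ᵥ S *ᵥ x = 0 := by linarith
    have hvx0 : v ⬝ᵥ x = 0 := by
      have hz : m⁻¹ * (v ⬝ᵥ x) ^ 2 = 0 := by linarith
      have := (mul_eq_zero.mp hz).resolve_left (inv_ne_zero hm.ne')
      exact sq_eq_zero_iff.mp this
    have hsum0 : ∑ i, ∑ j, A i j * (y i - y j) ^ 2 = 0 := by
      rw [quad_form A hsym d hdeg y, ← hq, hSx0]; ring
    have hterm : ∀ i j, A i j * (y i - y j) ^ 2 = 0 := by
      intro i j
      have h1' := (Finset.sum_eq_zero_iff_of_nonneg fun i _ =>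
        Finset.sum_nonneg fun j _ => mul_nonneg (hnn _ _) (sq_nonneg _)).mp
          hsum0 i (Finset.mem_univ i)
      exact (Finset.sum_eq_zero_iff_of_nonneg fun j _ =>
        mul_nonneg (hnn _ _) (sq_nonneg _)).mp h1' j (Finset.mem_univ j)
    have hloc : ∀ i j, A i j ≠ 0 → y i = y j := by
      intro i j hij
      have h := (mul_eq_zero.mp (hterm i j)).resolve_left hij
      exact sub_eq_zero.mp (sq_eq_zero_iff.mp h)
    have hconst : ∀ i j : Fin n, y i = y j := by
      intro i j
      induction hconn i j with
      | refl => rfl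
      | tail _ hbc ih => exact ih.trans (hloc _ _ hbc)
    have i0 : Fin n := ⟨0, hn⟩
    have hvx : v ⬝ᵥ x = m * y i0 := by
      rw [dotProduct, hm_def, Finset.sum_mul]
      refine Finset.sum_congr rfl fun i _ => ?_
      calc v i * x i = (v i * v i) * y i := by rw [hxy i]; ring
      _ = d i * y i0 := by rw [hvv i, hconst i i0]
    have hy0 : y i0 = 0 := by
      have hz : m * y i0 = 0 := by rw [← hvx]; exact hvx0
      exact (mul_eq_zero.mp hz).resolve_left hm.ne'
    funext i
    rw [hxy i, hconst i i0, hy0, zero_mul]; simp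
  have hinj : Function.Injective (S + P0).mulVec := by
    intro a b hab
    have hz : (S + P0) *ᵥ (a - b) = 0 := by
      rw [Matrix.mulVec_sub, hab, sub_self]
    exact sub_eq_zero.mp (hker _ hz)
  have hBunit : IsUnit (S + P0) := Matrix.mulVec_injective_iff_isUnit.mp hinj
  have hBdet : IsUnit (S + P0).det := (Matrix.isUnit_iff_isUnit_det _).mp hBunit
  set Bi : Matrix (Fin n) (Fin n) ℝ := (S + P0)⁻¹ with hBi_def
  have hBl : Bi * (S + P0) = 1 := Matrix.nonsing_inv_mul _ hBdet
  have hBr : (S + P0) * Bi = 1 := Matrix.mul_nonsing_inv _ hBdet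
  have hBP : (S + P0) * P0 = P0 := by rw [Matrix.add_mul, hSP, hPP, zero_add]
  have hPB : P0 * (S + P0) = P0 := by rw [Matrix.mul_add, hPS, hPP, zero_add]
  have hiP : Bi * P0 = P0 := by
    calc Bi * P0 = Bi * ((S + P0) * P0) := by rw [hBP]
    _ = (Bi * (S + P0)) * P0 := by rw [Matrix.mul_assoc]
    _ = P0 := by rw [hBl, Matrix.one_mul]
  have hPi : P0 * Bi = P0 := by
    calc P0 * Bi = (P0 * (S + P0)) * Bi := by rw [hPB]
    _ = P0 * ((S + P0) * Bi) := by rw [Matrix.mul_assoc]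
    _ = P0 := by rw [hBr, Matrix.mul_one]
  set N : Matrix (Fin n) (Fin n) ℝ := Bi - P0 with hN_def
  have hNS : N * S = 1 - P0 := by
    have hBiS : Bi * S = 1 - P0 := by
      calc Bi * S = Bi * ((S + P0) - P0) := by rw [add_sub_cancel_right]
      _ = Bi * (S + P0) - Bi * P0 := by rw [Matrix.mul_sub]
      _ = 1 - P0 := by rw [hBl, hiP]
    rw [hN_def, Matrix.sub_mul, hBiS, hPS, sub_zero]
  have hSN : S * N = 1 - P0 := by
    have hSBi : S * Bi = 1 - P0 := by
      calc S * Bi = ((S + P0) - P0) * Bi := by rw [add_sub_cancel_right]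
      _ = (S + P0) * Bi - P0 * Bi := by rw [Matrix.sub_mul]
      _ = 1 - P0 := by rw [hBr, hPi]
    rw [hN_def, Matrix.mul_sub, hSBi, hSP, sub_zero]
  have hP0sym : P0ᵀ = P0 := by
    rw [hP0_def, Matrix.transpose_smul]
    congr 1
    ext i j
    simp [vecMulVec_apply, mul_comm]
  have hmp : mpinv S = N := by
    apply mpinv_eq
    · rw [hSN, Matrix.sub_mul, Matrix.one_mul, hPS, sub_zero]
    · have hPN : P0 * N = 0 := by rw [hN_def, Matrix.mul_sub, hPi, hPP, sub_self]
      rw [hNS, Matrix.sub_mul, Matrix.one_mul, hPN, sub_zero]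
    · rw [hSN, transpose_sub, transpose_one, hP0sym]
    · rw [hNS, transpose_sub, transpose_one, hP0sym]
  have hdhL : dh * L = S * dsq := by
    rw [hS_def, Matrix.mul_assoc (dh * L) dh dsq, h1, Matrix.mul_one]
  calc gstar d L * L = (dh * N * dh) * L := by rw [gstar, ← hdh_def, ← hS_def, hmp]
  _ = dh * N * (S * dsq) := by rw [Matrix.mul_assoc (dh * N) dh L, hdhL]
  _ = dh * (1 - P0) * dsq := by
      rw [← Matrix.mul_assoc (dh * N) S dsq, Matrix.mul_assoc dh N S, hNS]
  _ = 1 - m⁻¹ • vecMulVec (fun _ => (1 : ℝ)) d := by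
      rw [Matrix.mul_sub, Matrix.mul_one, Matrix.sub_mul, h1]
      congr 1
      rw [hP0_def, Matrix.mul_smul, Matrix.smul_mul]
      congr 1
      ext i j
      rw [hdh_diag, hdsq_def]
      simp only [Matrix.mul_diagonal, Matrix.diagonal_mul, vecMulVec_apply, one_mul]
      calc 1 / v i * (v i * v j) * v j = (1 / v i * v i) * (v j * v j) := by ring
      _ = d j := by rw [one_div_mul_cancel (hv0 i).ne', one_mul, hvv j]
end

section
/- For a connected weighted graph, the generalized inverse L* of the Laplacian satisfies the fixed-point identity L* = D^{−1} + L* A D^{−1} − m^{−1} ι_n ι_n', where m = Σ_i d_i. -/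
open Matrix BigOperators

/-- Uniqueness of the Moore–Penrose pseudoinverse. -/
lemma mpinv_unique {k l : ℕ} (M : Matrix (Fin k) (Fin l) ℝ) (N : Matrix (Fin l) (Fin k) ℝ)
    (h1 : M * N * M = M) (h2 : N * M * N = N)
    (h3 : (M * N)ᵀ = M * N) (h4 : (N * M)ᵀ = N * M) :
    mpinv M = N := by
  have hex : ∃ N' : Matrix (Fin l) (Fin k) ℝ,
      M * N' * M = M ∧ N' * M * N' = N' ∧ (M * N')ᵀ = M * N' ∧ (N' * M)ᵀ = N' * M :=
    ⟨N, h1, h2, h3, h4⟩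
  rw [mpinv, dif_pos hex]
  obtain ⟨g1, g2, g3, g4⟩ := hex.choose_spec
  set B := hex.choose with hB
  have e1 : M * B = M * N := by
    have s1 : (M * B) * (M * N) = M * N := by
      rw [← Matrix.mul_assoc, Matrix.mul_assoc M B M, ← Matrix.mul_assoc, g1]
    have s2 : (M * B) * (M * N) = M * B := by
      conv_lhs => rw [← g3, ← h3]
      rw [← Matrix.transpose_mul, ← Matrix.mul_assoc (M * N) M B, h1, g3]
    rw [← s2, s1]
  have e2 : B * M = N * M := by
    have s1 : (N * M) * (B * M) = N * M := by
      rw [Matrix.mul_assoc N M (B * M), ← Matrix.mul_assoc M B M, g1]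
    have s2 : (N * M) * (B * M) = B * M := by
      conv_lhs => rw [← h4, ← g4]
      rw [← Matrix.transpose_mul, Matrix.mul_assoc B M (N * M), ← Matrix.mul_assoc M N M, h1, g4]
    rw [← s2, s1]
  calc B = B * M * B := g2.symm
    _ = (N * M) * B := by rw [e2]
    _ = N * (M * B) := Matrix.mul_assoc _ _ _
    _ = N * (M * N) := by rw [e1]
    _ = N * M * N := (Matrix.mul_assoc _ _ _).symm
    _ = N := h2

/-- fixed-point identity `L* = D⁻¹ + L* A D⁻¹ - m⁻¹ ιι'`, `m = Σᵢ dᵢ`. -/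
theorem stmt8 {n : ℕ} (A : Matrix (Fin n) (Fin n) ℝ) (hsym : Aᵀ = A)
    (hnn : ∀ i j, 0 ≤ A i j) (hdiag : ∀ i, A i i = 0)
    (d : Fin n → ℝ) (hdeg : ∀ i, d i = ∑ j, A i j) (hdpos : ∀ i, 0 < d i)
    (hconn : Conn A) :
    gstar d (Matrix.diagonal d - A) =
      Matrix.diagonal (fun i => (d i)⁻¹)
      + gstar d (Matrix.diagonal d - A) * A * Matrix.diagonal (fun i => (d i)⁻¹)
      - (∑ i, d i)⁻¹ • vecMulVec (fun _ => (1 : ℝ)) (fun _ => (1 : ℝ)) := by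
  rcases Nat.eq_zero_or_pos n with hn0 | hn
  · subst hn0
    exact Subsingleton.elim _ _
  have hAsym : ∀ i j, A i j = A j i := by
    intro i j
    conv_rhs => rw [← hsym]
    rw [Matrix.transpose_apply]
  set w : Fin n → ℝ := fun i => Real.sqrt (d i) with hwdef
  have hwpos : ∀ i, 0 < w i := fun i => Real.sqrt_pos.2 (hdpos i)
  have hwne : ∀ i, w i ≠ 0 := fun i => (hwpos i).ne'
  have hww : ∀ i, w i * w i = d i := fun i => Real.mul_self_sqrt (hdpos i).le
  have hm : 0 < ∑ i, d i := Finset.sum_pos (fun i _ => hdpos i) ⟨⟨0, hn⟩, Finset.mem_univ _⟩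
  set mm := ∑ i, d i with hmmdef
  have hmne : mm ≠ 0 := ne_of_gt hm
  unfold gstar
  set E := dhalfInv d with hEdef
  have hE : E = Matrix.diagonal (fun i => (w i)⁻¹) := by
    simp only [hEdef, dhalfInv, one_div]
    rfl
  set L : Matrix (Fin n) (Fin n) ℝ := Matrix.diagonal d - A with hLdef
  set S := E * L * E with hSdef
  set V := vecMulVec w w with hVdef
  have hLapply : ∀ i j, L i j = Matrix.diagonal d i j - A i j := fun i j => rfl
  have hrow : ∀ i, ∑ j, L i j = 0 := by
    intro i
    simp only [hLapply, Matrix.diagonal_apply]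
    rw [Finset.sum_sub_distrib]
    simp [Finset.sum_ite_eq, ← hdeg i]
  have hSapply : ∀ i j, S i j = (w i)⁻¹ * L i j * (w j)⁻¹ := by
    intro i j
    rw [hSdef, hE]
    simp [Matrix.mul_diagonal, Matrix.diagonal_mul]
  have h1 : S * V = 0 := by
    ext i j
    rw [Matrix.mul_apply]
    simp only [hSapply, hVdef, Matrix.vecMulVec_apply, Matrix.zero_apply]
    have hterm : ∀ k, (w i)⁻¹ * L i k * (w k)⁻¹ * (w k * w j) = (w i)⁻¹ * w j * L i k := by
      intro k
      calc (w i)⁻¹ * L i k * (w k)⁻¹ * (w k * w j)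
          = ((w k)⁻¹ * w k) * ((w i)⁻¹ * w j * L i k) := by ring
        _ = (w i)⁻¹ * w j * L i k := by rw [inv_mul_cancel₀ (hwne k), one_mul]
    rw [Finset.sum_congr rfl fun k _ => hterm k, ← Finset.mul_sum, hrow i, mul_zero]
  have hLt : Lᵀ = L := by
    rw [hLdef, Matrix.transpose_sub, Matrix.diagonal_transpose, hsym]
  have hSsym : Sᵀ = S := by
    rw [hSdef, hE]
    simp [Matrix.transpose_mul, Matrix.diagonal_transpose, hLt, Matrix.mul_assoc]
  have hVt : Vᵀ = V := by
    rw [hVdef]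
    ext i j
    simp [Matrix.transpose_apply, Matrix.vecMulVec_apply, mul_comm]
  have h2 : V * S = 0 := by
    have h := congrArg Matrix.transpose h1
    rw [Matrix.transpose_mul, hVt, hSsym, Matrix.transpose_zero] at h
    exact h
  have hVV : V * V = mm • V := by
    ext i j
    rw [Matrix.mul_apply]
    simp only [hVdef, Matrix.vecMulVec_apply, Matrix.smul_apply, smul_eq_mul]
    have hterm : ∀ k, (w i * w k) * (w k * w j) = (w i * w j) * d k := by
      intro k
      rw [← hww k]
      ring
    rw [Finset.sum_congr rfl fun k _ => hterm k, ← Finset.mul_sum, ← hmmdef]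
    ring
  set Q := S + mm⁻¹ • V with hQdef
  have hQV : Q * V = V := by
    rw [hQdef, Matrix.add_mul, h1, Matrix.smul_mul, hVV, zero_add, smul_smul,
      inv_mul_cancel₀ hmne, one_smul]
  have hVQ : V * Q = V := by
    rw [hQdef, Matrix.mul_add, h2, Matrix.mul_smul, hVV, zero_add, smul_smul,
      inv_mul_cancel₀ hmne, one_smul]
  have hdet : Q.det ≠ 0 := by
    intro hdet0
    obtain ⟨x, hx0, hxQ⟩ := Matrix.exists_mulVec_eq_zero_iff.mpr hdet0
    set y : Fin n → ℝ := fun i => (w i)⁻¹ * x i with hydef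
    have hxy : ∀ i, x i = w i * y i := by
      intro i
      simp only [hydef]
      rw [← mul_assoc, mul_inv_cancel₀ (hwne i), one_mul]
    have hSx : x ⬝ᵥ (S *ᵥ x) = ∑ i, ∑ j, y i * L i j * y j := by
      simp only [dotProduct, Matrix.mulVec, hSapply]
      refine Finset.sum_congr rfl fun i _ => ?_
      rw [Finset.mul_sum]
      refine Finset.sum_congr rfl fun j _ => ?_
      rw [hydef]
      ring
    have hVx : x ⬝ᵥ (V *ᵥ x) = (∑ i, w i * x i) ^ 2 := by
      simp only [dotProduct, Matrix.mulVec, hVdef, Matrix.vecMulVec_apply]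
      rw [sq, Finset.sum_mul_sum]
      refine Finset.sum_congr rfl fun i _ => ?_
      rw [Finset.mul_sum]
      refine Finset.sum_congr rfl fun j _ => ?_
      ring
    have hdot : x ⬝ᵥ (Q *ᵥ x) = 0 := by rw [hxQ, dotProduct_zero]
    have hexp : (∑ i, ∑ j, y i * L i j * y j) + mm⁻¹ * (∑ i, w i * x i) ^ 2 = 0 := by
      have e := hdot
      simp only [hQdef, Matrix.add_mulVec, dotProduct_add, Matrix.smul_mulVec,
        dotProduct_smul, smul_eq_mul, hSx, hVx] at e
      exact e
    set qS := ∑ i, ∑ j, y i * L i j * y j with hqSdef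
    have hqS : qS = (∑ i, d i * (y i) ^ 2) - ∑ i, ∑ j, A i j * (y i * y j) := by
      rw [hqSdef, ← Finset.sum_sub_distrib]
      refine Finset.sum_congr rfl fun i _ => ?_
      simp only [hLapply, Matrix.diagonal_apply]
      have hterm : ∀ j, y i * ((if i = j then d i else 0) - A i j) * y j
          = (if i = j then d i * (y i) ^ 2 else 0) - A i j * (y i * y j) := by
        intro j
        by_cases h : i = j
        · subst h
          simp
          ring
        · simp [h]
          ring
      rw [Finset.sum_congr rfl fun j _ => hterm j, Finset.sum_sub_distrib]
      simp [Finset.sum_ite_eq]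
    have hsum1 : ∑ i, ∑ j, A i j * (y i) ^ 2 = ∑ i, d i * (y i) ^ 2 := by
      refine Finset.sum_congr rfl fun i _ => ?_
      rw [← Finset.sum_mul, ← hdeg i]
    have hsum2 : ∑ i, ∑ j, A i j * (y j) ^ 2 = ∑ i, d i * (y i) ^ 2 := by
      rw [Finset.sum_comm]
      refine Finset.sum_congr rfl fun j _ => ?_
      have e1 : ∑ i, A i j * (y j) ^ 2 = (∑ i, A j i) * (y j) ^ 2 := by
        rw [Finset.sum_mul]
        exact Finset.sum_congr rfl fun i _ => by rw [hAsym i j]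
      rw [e1, ← hdeg j]
    have hq2 : ∑ i, ∑ j, A i j * (y i - y j) ^ 2 = 2 * qS := by
      have expand : ∀ i j, A i j * (y i - y j) ^ 2
          = A i j * (y i) ^ 2 + A i j * (y j) ^ 2 - 2 * (A i j * (y i * y j)) := by
        intro i j
        ring
      calc ∑ i, ∑ j, A i j * (y i - y j) ^ 2
          = ∑ i, ∑ j, (A i j * (y i) ^ 2 + A i j * (y j) ^ 2 - 2 * (A i j * (y i * y j))) :=
            Finset.sum_congr rfl fun i _ => Finset.sum_congr rfl fun j _ => expand i j
        _ = (∑ i, ∑ j, A i j * (y i) ^ 2) + (∑ i, ∑ j, A i j * (y j) ^ 2)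
              - 2 * (∑ i, ∑ j, A i j * (y i * y j)) := by
            simp only [Finset.sum_add_distrib, Finset.sum_sub_distrib, ← Finset.mul_sum]
        _ = 2 * qS := by
            rw [hsum1, hsum2, hqS]
            ring
    have hqSnonneg : 0 ≤ qS := by
      have h0 : 0 ≤ ∑ i, ∑ j, A i j * (y i - y j) ^ 2 :=
        Finset.sum_nonneg fun i _ => Finset.sum_nonneg fun j _ =>
          mul_nonneg (hnn i j) (sq_nonneg _)
      linarith [hq2]
    have hsqnn : 0 ≤ (∑ i, w i * x i) ^ 2 := sq_nonneg _
    have hminv : 0 < mm⁻¹ := inv_pos.2 hm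
    have hqS0 : qS = 0 := by nlinarith [hexp, hqSnonneg, hsqnn, hminv]
    have hsx0 : (∑ i, w i * x i) = 0 := by
      have h1' : mm⁻¹ * (∑ i, w i * x i) ^ 2 = 0 := by linarith [hexp, hqS0]
      have h2' : (∑ i, w i * x i) ^ 2 = 0 := by
        rcases mul_eq_zero.1 h1' with h | h
        · exact absurd h (ne_of_gt hminv)
        · exact h
      exact pow_eq_zero_iff two_ne_zero |>.1 h2'
    have hT0 : ∑ i, ∑ j, A i j * (y i - y j) ^ 2 = 0 := by
      rw [hq2, hqS0, mul_zero]
    have hterm0 : ∀ i j, A i j * (y i - y j) ^ 2 = 0 := by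
      intro i j
      have houter := (Finset.sum_eq_zero_iff_of_nonneg fun i (_ : i ∈ Finset.univ) =>
        Finset.sum_nonneg fun j _ => mul_nonneg (hnn i j) (sq_nonneg (y i - y j))).1 hT0
      have hinner := (Finset.sum_eq_zero_iff_of_nonneg fun j (_ : j ∈ Finset.univ) =>
        mul_nonneg (hnn i j) (sq_nonneg (y i - y j))).1 (houter i (Finset.mem_univ i))
      exact hinner j (Finset.mem_univ j)
    have hstep : ∀ i j, A i j ≠ 0 → y i = y j := by
      intro i j hA
      rcases mul_eq_zero.1 (hterm0 i j) with h | h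
      · exact absurd h hA
      · exact sub_eq_zero.1 (pow_eq_zero_iff two_ne_zero |>.1 h)
    have hconst : ∀ i j, y i = y j := by
      intro i j
      have h := hconn i j
      induction h with
      | refl => rfl
      | tail hab hbc ih => exact ih.trans (hstep _ _ hbc)
    have hk : (⟨0, hn⟩ : Fin n) = ⟨0, hn⟩ := rfl
    set k : Fin n := ⟨0, hn⟩ with hkdef
    have hsum : ∑ i, w i * x i = mm * y k := by
      calc ∑ i, w i * x i = ∑ i, d i * y k := by
            refine Finset.sum_congr rfl fun i _ => ?_
            rw [hxy i, ← hww i, hconst i k]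
            ring
        _ = (∑ i, d i) * y k := by rw [Finset.sum_mul]
        _ = mm * y k := by rw [← hmmdef]
    have hyk : y k = 0 := by
      have h0 : mm * y k = 0 := by rw [← hsum, hsx0]
      rcases mul_eq_zero.1 h0 with h | h
      · exact absurd h hmne
      · exact h
    have hx : x = 0 := by
      funext i
      show x i = 0
      rw [hxy i, hconst i k, hyk, mul_zero]
    exact hx0 hx
  have hu : IsUnit Q.det := isUnit_iff_ne_zero.2 hdet
  have hQQ : Q * Q⁻¹ = 1 := Matrix.mul_nonsing_inv Q hu
  have hQQ' : Q⁻¹ * Q = 1 := Matrix.nonsing_inv_mul Q hu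
  clear_value w mm E L S V Q
  have hQiV : Q⁻¹ * V = V := by
    calc Q⁻¹ * V = Q⁻¹ * (Q * V) := by rw [hQV]
      _ = (Q⁻¹ * Q) * V := (Matrix.mul_assoc _ _ _).symm
      _ = V := by rw [hQQ', Matrix.one_mul]
  have hVQi : V * Q⁻¹ = V := by
    calc V * Q⁻¹ = (V * Q) * Q⁻¹ := by rw [hVQ]
      _ = V * (Q * Q⁻¹) := Matrix.mul_assoc _ _ _
      _ = V := by rw [hQQ, Matrix.mul_one]
  set N := Q⁻¹ - mm⁻¹ • V with hNdef
  have hSQ : S = Q - mm⁻¹ • V := by rw [hQdef, add_sub_cancel_right]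
  have hcc : mm⁻¹ * (mm⁻¹ * mm) = mm⁻¹ := by field_simp
  have hNS : N * S = 1 - mm⁻¹ • V := by
    simp only [hNdef, hSQ, Matrix.sub_mul, Matrix.mul_sub, Matrix.smul_mul, Matrix.mul_smul,
      hQQ', hQiV, hVQ, hVV, smul_smul, hcc, inv_mul_cancel₀ hmne, one_smul, smul_zero, sub_self]
    abel
  have hSN : S * N = 1 - mm⁻¹ • V := by
    simp only [hNdef, hSQ, Matrix.sub_mul, Matrix.mul_sub, Matrix.smul_mul, Matrix.mul_smul,
      hQQ, hQV, hVQi, hVV, smul_smul, hcc, inv_mul_cancel₀ hmne, one_smul, smul_zero, sub_self]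
    abel
  have hVN : V * N = 0 := by
    rw [hNdef, Matrix.mul_sub, hVQi, Matrix.mul_smul, hVV, smul_smul,
      inv_mul_cancel₀ hmne, one_smul, sub_self]
  have hPt : (1 - mm⁻¹ • V)ᵀ = 1 - mm⁻¹ • V := by
    rw [Matrix.transpose_sub, Matrix.transpose_one, Matrix.transpose_smul, hVt]
  have p1 : S * N * S = S := by
    rw [hSN, Matrix.sub_mul, Matrix.one_mul, Matrix.smul_mul, h2, smul_zero, sub_zero]
  have p2 : N * S * N = N := by
    rw [hNS, Matrix.sub_mul, Matrix.one_mul, Matrix.smul_mul, hVN, smul_zero, sub_zero]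
  have p3 : (S * N)ᵀ = S * N := by rw [hSN]; exact hPt
  have p4 : (N * S)ᵀ = N * S := by rw [hNS]; exact hPt
  have hmp : mpinv S = N := mpinv_unique S N p1 p2 p3 p4
  rw [hmp]
  set Dinv := Matrix.diagonal (fun i => (d i)⁻¹) with hDinvdef
  clear_value N Dinv
  have hEE : E * E = Dinv := by
    rw [hE, hDinvdef, Matrix.diagonal_mul_diagonal,
      show (fun i => (w i)⁻¹ * (w i)⁻¹) = fun i => (d i)⁻¹ from
        funext fun i => by rw [← hww i, mul_inv]]
  have hDDinv : Matrix.diagonal d * Dinv = 1 := by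
    rw [hDinvdef, Matrix.diagonal_mul_diagonal]
    rw [show (fun i => d i * (d i)⁻¹) = fun _ => (1 : ℝ) from
      funext fun i => mul_inv_cancel₀ (hdpos i).ne', Matrix.diagonal_one]
  have hEVE : E * V * E = vecMulVec (fun _ => (1 : ℝ)) (fun _ => (1 : ℝ)) := by
    rw [hE, hVdef]
    ext i j
    rw [Matrix.mul_diagonal, Matrix.diagonal_mul, Matrix.vecMulVec_apply, Matrix.vecMulVec_apply]
    field_simp
    exact div_self (mul_ne_zero (hwne i) (hwne j))
  have hG : E * N * E * L * Dinv
      = Dinv - mm⁻¹ • vecMulVec (fun _ => (1 : ℝ)) (fun _ => (1 : ℝ)) := by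
    have h5 : E * N * E * L * Dinv = E * (N * S) * E := by
      rw [← hEE, hSdef]
      simp only [Matrix.mul_assoc]
    rw [h5, hNS, Matrix.mul_sub, Matrix.mul_one, Matrix.mul_smul, Matrix.sub_mul,
      Matrix.smul_mul, hEE, hEVE]
  have hLexp : E * N * E * L * Dinv = E * N * E - E * N * E * A * Dinv := by
    rw [hLdef, Matrix.mul_sub, Matrix.sub_mul,
      Matrix.mul_assoc (E * N * E) (Matrix.diagonal d) Dinv, hDDinv, Matrix.mul_one]
  have key : E * N * E - E * N * E * A * Dinv
      = Dinv - mm⁻¹ • vecMulVec (fun _ => (1 : ℝ)) (fun _ => (1 : ℝ)) := by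
    rw [← hLexp, hG]
  calc E * N * E
      = (E * N * E - E * N * E * A * Dinv) + E * N * E * A * Dinv := by abel
    _ = (Dinv - mm⁻¹ • vecMulVec (fun _ => (1 : ℝ)) (fun _ => (1 : ℝ)))
        + E * N * E * A * Dinv := by rw [key]
    _ = Dinv + E * N * E * A * Dinv
        - mm⁻¹ • vecMulVec (fun _ => (1 : ℝ)) (fun _ => (1 : ℝ)) := by abel
end

section
/- For a connected weighted graph, L* satisfies the second-order expansion L* = D^{−1} + D^{−1}AD^{−1} + D^{−1}A L* A D^{−1} − 2 m^{−1} ι_n ι_n'. -/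
open Matrix BigOperators

/- ### Auxiliary lemmas -/

lemma aux_mul_vecMulVec {n : ℕ} (M : Matrix (Fin n) (Fin n) ℝ) (a b : Fin n → ℝ) :
    M * vecMulVec a b = vecMulVec (M *ᵥ a) b := by
  ext i j
  simp [mul_apply, vecMulVec_apply, mulVec, dotProduct, Finset.sum_mul, mul_assoc]

lemma aux_vecMulVec_mul {n : ℕ} (M : Matrix (Fin n) (Fin n) ℝ) (a b : Fin n → ℝ) :
    vecMulVec a b * M = vecMulVec a (b ᵥ* M) := by
  ext i j
  simp only [mul_apply, vecMulVec_apply, vecMul, dotProduct, Finset.mul_sum]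
  congr 1; ext k; ring

lemma aux_vecMulVec_mul_vecMulVec {n : ℕ} (a b c e : Fin n → ℝ) :
    vecMulVec a b * vecMulVec c e = (b ⬝ᵥ c) • vecMulVec a e := by
  ext i j
  simp only [mul_apply, vecMulVec_apply, dotProduct, Matrix.smul_apply, smul_eq_mul, Finset.sum_mul]
  congr 1; ext k; ring

lemma aux_vecMulVec_transpose {n : ℕ} (a : Fin n → ℝ) :
    (vecMulVec a a)ᵀ = vecMulVec a a := by
  ext i j; simp [vecMulVec_apply, mul_comm]

/-- Uniqueness of the Moore–Penrose pseudoinverse. -/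
lemma penrose_unique_s9 {n : ℕ} {M N₁ N₂ : Matrix (Fin n) (Fin n) ℝ}
    (a1 : M * N₁ * M = M) (a2 : N₁ * M * N₁ = N₁) (a3 : (M * N₁)ᵀ = M * N₁)
    (a4 : (N₁ * M)ᵀ = N₁ * M)
    (b1 : M * N₂ * M = M) (b2 : N₂ * M * N₂ = N₂) (b3 : (M * N₂)ᵀ = M * N₂)
    (b4 : (N₂ * M)ᵀ = N₂ * M) : N₁ = N₂ := by
  have hMN : M * N₁ = M * N₂ := by
    calc M * N₁ = (M * N₁)ᵀ := a3.symm
    _ = ((M * N₂) * (M * N₁))ᵀ := by rw [← mul_assoc, mul_assoc M N₂ M, ← mul_assoc, b1]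
    _ = (M * N₁)ᵀ * (M * N₂)ᵀ := transpose_mul _ _
    _ = (M * N₁) * (M * N₂) := by rw [a3, b3]
    _ = M * N₂ := by rw [← mul_assoc, a1]
  have hNM : N₁ * M = N₂ * M := by
    calc N₁ * M = (N₁ * M)ᵀ := a4.symm
    _ = ((N₁ * M) * (N₂ * M))ᵀ := by rw [mul_assoc, ← mul_assoc M N₂ M, b1]
    _ = (N₂ * M)ᵀ * (N₁ * M)ᵀ := transpose_mul _ _
    _ = (N₂ * M) * (N₁ * M) := by rw [a4, b4]
    _ = N₂ * M := by rw [mul_assoc, ← mul_assoc M N₁ M, a1]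
  calc N₁ = N₁ * M * N₁ := a2.symm
  _ = N₁ * (M * N₂) := by rw [mul_assoc, hMN]
  _ = N₂ * M * N₂ := by rw [← mul_assoc, hNM]
  _ = N₂ := b2

set_option maxHeartbeats 1600000 in
/-- second-order expansion
`L* = D⁻¹ + D⁻¹AD⁻¹ + D⁻¹A L* A D⁻¹ - 2m⁻¹ ιι'`, `m = Σᵢ dᵢ`. -/
theorem stmt9 {n : ℕ} (A : Matrix (Fin n) (Fin n) ℝ) (hsym : Aᵀ = A)
    (hnn : ∀ i j, 0 ≤ A i j) (hdiag : ∀ i, A i i = 0)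
    (d : Fin n → ℝ) (hdeg : ∀ i, d i = ∑ j, A i j) (hdpos : ∀ i, 0 < d i)
    (hconn : Conn A) :
    gstar d (Matrix.diagonal d - A) =
      Matrix.diagonal (fun i => (d i)⁻¹)
      + Matrix.diagonal (fun i => (d i)⁻¹) * A * Matrix.diagonal (fun i => (d i)⁻¹)
      + Matrix.diagonal (fun i => (d i)⁻¹) * A * gstar d (Matrix.diagonal d - A) * A *
          Matrix.diagonal (fun i => (d i)⁻¹)
      - (2 * (∑ i, d i)⁻¹) • vecMulVec (fun _ => (1 : ℝ)) (fun _ => (1 : ℝ)) := by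
  classical
  rcases Nat.eq_zero_or_pos n with h0 | hn
  · subst h0; ext i j; exact i.elim0
  have hne : Nonempty (Fin n) := ⟨⟨0, hn⟩⟩
  set L : Matrix (Fin n) (Fin n) ℝ := Matrix.diagonal d - A with hLdef
  set m : ℝ := ∑ i, d i with hmdef
  have hm : 0 < m := Finset.sum_pos (fun i _ => hdpos i) Finset.univ_nonempty
  set sd : Fin n → ℝ := fun i => Real.sqrt (d i) with hsddef
  have hsd : ∀ i, 0 < sd i := fun i => Real.sqrt_pos.2 (hdpos i)
  have hsd2 : ∀ i, sd i * sd i = d i := fun i => Real.mul_self_sqrt (hdpos i).le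
  set sm : ℝ := Real.sqrt m with hsmdef
  have hsm : 0 < sm := Real.sqrt_pos.2 hm
  have hsm2 : sm * sm = m := Real.mul_self_sqrt hm.le
  set v : Fin n → ℝ := fun i => sd i / sm with hvdef
  set Dh : Matrix (Fin n) (Fin n) ℝ := dhalfInv d with hDhdef
  set Ds : Matrix (Fin n) (Fin n) ℝ := Matrix.diagonal sd with hDsdef
  have hDh : Dh = Matrix.diagonal (fun i => 1 / sd i) := rfl
  have hone : ∀ i, 1 / sd i * sd i = (1:ℝ) := fun i => by
    rw [one_div, inv_mul_cancel₀ (hsd i).ne']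
  have hone' : ∀ i, sd i * (1 / sd i) = (1:ℝ) := fun i => by
    rw [mul_comm]; exact hone i
  have hDhDs : Dh * Ds = 1 := by
    rw [hDh, hDsdef, diagonal_mul_diagonal, funext hone, diagonal_one]
  have hDsDh : Ds * Dh = 1 := by
    rw [hDh, hDsdef, diagonal_mul_diagonal, funext hone', diagonal_one]
  set S : Matrix (Fin n) (Fin n) ℝ := Dh * L * Dh with hSdef
  have hLsym : Lᵀ = L := by
    rw [hLdef, transpose_sub, hsym, diagonal_transpose]
  have hSsym : Sᵀ = S := by
    rw [hSdef, transpose_mul, transpose_mul, hLsym, hDh, diagonal_transpose, mul_assoc]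
  -- row sums of L vanish
  have hLrow : L *ᵥ (fun _ => (1 : ℝ)) = 0 := by
    funext i
    simp [hLdef, sub_mulVec, mulVec, dotProduct, diagonal, hdeg i]
  have hLcol : (fun _ => (1 : ℝ)) ᵥ* L = 0 := by
    have := congrArg (fun M => (fun _ => (1:ℝ)) ᵥ* M) hLsym
    simpa [vecMul_transpose, hLrow] using this.symm
  -- quadratic form of L
  have hqf : ∀ w : Fin n → ℝ, 2 * (w ⬝ᵥ (L *ᵥ w)) = ∑ i, ∑ j, A i j * (w i - w j) ^ 2 := by
    intro w
    have hsym' : ∀ i j, A j i = A i j := fun i j => congrFun (congrFun hsym i) j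
    have e1 : ∑ i, ∑ j, A i j * (w i - w j) ^ 2
        = (∑ i, ∑ j, A i j * w i ^ 2) + (∑ i, ∑ j, A i j * w j ^ 2)
          - 2 * ∑ i, ∑ j, A i j * (w i * w j) := by
      have : ∀ i j : Fin n, A i j * (w i - w j) ^ 2
          = A i j * w i ^ 2 + A i j * w j ^ 2 - 2 * (A i j * (w i * w j)) :=
        fun i j => by ring
      simp only [this, Finset.sum_sub_distrib, Finset.sum_add_distrib, ← Finset.mul_sum]
    have e2 : (∑ i, ∑ j, A i j * w i ^ 2) = ∑ i, d i * w i ^ 2 := by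
      refine Finset.sum_congr rfl fun i _ => ?_
      rw [← Finset.sum_mul, ← hdeg i]
    have e3 : (∑ i, ∑ j, A i j * w j ^ 2) = ∑ j, d j * w j ^ 2 := by
      rw [Finset.sum_comm]
      refine Finset.sum_congr rfl fun j _ => ?_
      have : ∀ i, A i j = A j i := fun i => (hsym' i j).symm ▸ rfl
      calc ∑ i, A i j * w j ^ 2 = ∑ i, A j i * w j ^ 2 :=
            Finset.sum_congr rfl fun i _ => by rw [hsym' i j]
      _ = d j * w j ^ 2 := by rw [← Finset.sum_mul, ← hdeg j]
    have e4 : w ⬝ᵥ (L *ᵥ w) = (∑ i, d i * w i ^ 2) - ∑ i, ∑ j, A i j * (w i * w j) := by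
      rw [hLdef, sub_mulVec, dotProduct_sub]
      congr 1
      · simp only [dotProduct, mulVec_diagonal]
        exact Finset.sum_congr rfl fun i _ => by ring
      · simp only [dotProduct, mulVec]
        refine Finset.sum_congr rfl fun i _ => ?_
        rw [Finset.mul_sum]
        exact Finset.sum_congr rfl fun j _ => by ring
    rw [e1, e2, e3, e4]; ring
  -- kernel of the quadratic form: constants
  have hker : ∀ w : Fin n → ℝ, w ⬝ᵥ (L *ᵥ w) = 0 → ∀ i j, w i = w j := by
    intro w hw
    have hzero : ∑ i, ∑ j, A i j * (w i - w j) ^ 2 = 0 := by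
      rw [← hqf w, hw]; ring
    have hnn' : ∀ i j, (0:ℝ) ≤ A i j * (w i - w j) ^ 2 :=
      fun i j => mul_nonneg (hnn i j) (sq_nonneg _)
    have hterm : ∀ i j, A i j * (w i - w j) ^ 2 = 0 := by
      intro i j
      have h1 := (Finset.sum_eq_zero_iff_of_nonneg
        (fun i _ => Finset.sum_nonneg fun j _ => hnn' i j)).1 hzero i (Finset.mem_univ i)
      exact (Finset.sum_eq_zero_iff_of_nonneg fun j _ => hnn' i j).1 h1 j (Finset.mem_univ j)
    have hadj : ∀ i j, A i j ≠ 0 → w i = w j := by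
      intro i j hA
      have := hterm i j
      rcases mul_eq_zero.1 this with h | h
      · exact absurd h hA
      · have := pow_eq_zero_iff (n := 2) (by norm_num) |>.1 h
        linarith [sub_eq_zero.1 this]
    intro i j
    induction hconn i j with
    | refl => rfl
    | tail _ h ih => exact ih.trans (hadj _ _ h)
  -- S kills v
  have hDhv : Dh *ᵥ v = fun _ => sm⁻¹ := by
    funext i
    rw [hDh]
    simp only [mulVec_diagonal, hvdef]
    rw [one_div, div_eq_mul_inv, ← mul_assoc, inv_mul_cancel₀ (hsd i).ne', one_mul]
  have hSv : S *ᵥ v = 0 := by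
    rw [hSdef, ← mulVec_mulVec, ← mulVec_mulVec, hDhv]
    have : (fun _ => sm⁻¹ : Fin n → ℝ) = sm⁻¹ • (fun _ => (1:ℝ)) := by
      funext i; simp
    rw [this, mulVec_smul, hLrow]
    simp
  have hvv : v ⬝ᵥ v = 1 := by
    simp only [dotProduct, hvdef, div_mul_div_comm, hsm2, hsd2]
    rw [← Finset.sum_div, ← hmdef]
    exact div_self hm.ne'
  -- the rank-one correction
  set Vv : Matrix (Fin n) (Fin n) ℝ := vecMulVec v v with hVvdef
  have hVvT : Vvᵀ = Vv := aux_vecMulVec_transpose v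
  have hVv2 : Vv * Vv = Vv := by
    rw [hVvdef, aux_vecMulVec_mul_vecMulVec, hvv, one_smul]
  have hSVv : S * Vv = 0 := by
    rw [hVvdef, aux_mul_vecMulVec, hSv]
    ext i j; simp [vecMulVec_apply]
  have hVvS : Vv * S = 0 := by
    have h := congrArg Matrix.transpose hSVv
    rw [transpose_mul, hVvT, hSsym, transpose_zero] at h
    exact h
  set T : Matrix (Fin n) (Fin n) ℝ := S + Vv with hTdef
  have hTker : ∀ x : Fin n → ℝ, T *ᵥ x = 0 → x = 0 := by
    intro x hx
    set w : Fin n → ℝ := fun i => x i / sd i with hwdef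
    have hDhx : Dh *ᵥ x = w := by
      funext i
      rw [hDh, mulVec_diagonal]
      simp only [hwdef]
      ring
    have hq : x ⬝ᵥ (T *ᵥ x) = 0 := by rw [hx, dotProduct_zero]
    have hsplit : x ⬝ᵥ (T *ᵥ x) = (w ⬝ᵥ (L *ᵥ w)) + (v ⬝ᵥ x) ^ 2 := by
      rw [hTdef, add_mulVec, dotProduct_add]
      congr 1
      · rw [hSdef, ← mulVec_mulVec, ← mulVec_mulVec, hDhx, dotProduct_mulVec x Dh]
        congr 1
        rw [← hDhx]
        funext i
        rw [hDh, mulVec_diagonal, vecMul_diagonal, mul_comm]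
      · rw [hVvdef]
        have hmv : vecMulVec v v *ᵥ x = (v ⬝ᵥ x) • v := by
          funext i
          simp only [mulVec, vecMulVec_apply, dotProduct, Pi.smul_apply, smul_eq_mul]
          rw [Finset.sum_mul]
          exact Finset.sum_congr rfl fun j _ => by ring
        rw [hmv, dotProduct_smul, smul_eq_mul, dotProduct_comm, sq]
    have hwLw : 0 ≤ w ⬝ᵥ (L *ᵥ w) := by
      have h2 := hqf w
      have hnn2 : 0 ≤ ∑ i, ∑ j, A i j * (w i - w j) ^ 2 :=
        Finset.sum_nonneg fun i _ => Finset.sum_nonneg fun j _ =>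
          mul_nonneg (hnn i j) (sq_nonneg _)
      linarith
    have hboth : w ⬝ᵥ (L *ᵥ w) = 0 ∧ (v ⬝ᵥ x) = 0 := by
      constructor
      · nlinarith [sq_nonneg (v ⬝ᵥ x), hsplit, hq]
      · nlinarith [sq_nonneg (v ⬝ᵥ x), hsplit, hq, hwLw]
    obtain ⟨hw0, hvx0⟩ := hboth
    have hwc := hker w hw0
    set i₀ : Fin n := ⟨0, hn⟩
    have hxw : ∀ i, x i = sd i * w i := by
      intro i
      simp only [hwdef]
      rw [mul_div_assoc', mul_comm, mul_div_assoc, div_self (hsd i).ne', mul_one]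
    have hvx : v ⬝ᵥ x = m * (w i₀ / sm) := by
      calc v ⬝ᵥ x = ∑ i, (sd i / sm) * (sd i * w i₀) := by
            refine Finset.sum_congr rfl fun i _ => ?_
            rw [hvdef, hxw i, hwc i i₀]
      _ = ∑ i, d i * (w i₀ / sm) := by
            refine Finset.sum_congr rfl fun i _ => ?_
            rw [← hsd2 i]; ring
      _ = m * (w i₀ / sm) := by rw [← Finset.sum_mul, ← hmdef]
    have hwi0 : w i₀ = 0 := by
      rw [hvx] at hvx0
      rcases mul_eq_zero.1 hvx0 with h | h
      · exact absurd h hm.ne'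
      · field_simp at h
        exact h.trans (mul_zero sm)
    funext i
    rw [hxw i, hwc i i₀, hwi0, mul_zero]
    rfl
  have hTunit : IsUnit T := by
    rw [← Matrix.mulVec_injective_iff_isUnit]
    intro x y hxy
    have h1 : T *ᵥ (x - y) = 0 := by
      rw [mulVec_sub, hxy, sub_self]
    exact sub_eq_zero.1 (hTker _ h1)
  have hTdet : IsUnit T.det := (Matrix.isUnit_iff_isUnit_det T).1 hTunit
  have hTT : T * T⁻¹ = 1 := Matrix.mul_nonsing_inv T hTdet
  have hTT' : T⁻¹ * T = 1 := Matrix.nonsing_inv_mul T hTdet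
  have hTVv : T * Vv = Vv := by rw [hTdef, add_mul, hSVv, hVv2, zero_add]
  have hVvT2 : Vv * T = Vv := by rw [hTdef, mul_add, hVvS, hVv2, zero_add]
  have hTiVv : T⁻¹ * Vv = Vv := by
    calc T⁻¹ * Vv = T⁻¹ * (T * Vv) := by rw [hTVv]
    _ = (T⁻¹ * T) * Vv := (mul_assoc _ _ _).symm
    _ = Vv := by rw [hTT', one_mul]
  have hVvTi : Vv * T⁻¹ = Vv := by
    calc Vv * T⁻¹ = (Vv * T) * T⁻¹ := by rw [hVvT2]
    _ = Vv := by rw [mul_assoc, hTT, mul_one]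
  set N : Matrix (Fin n) (Fin n) ℝ := T⁻¹ - Vv with hNdef
  have hST : S = T - Vv := by rw [hTdef, add_sub_cancel_right]
  have hSN : S * N = 1 - Vv := by
    rw [hST, hNdef, sub_mul, mul_sub, mul_sub, hTT, hTVv, hVvTi, hVv2, sub_self, sub_zero]
  have hNS : N * S = 1 - Vv := by
    rw [hST, hNdef, sub_mul, mul_sub, mul_sub, hTT', hTiVv, hVvT2, hVv2, sub_self, sub_zero]
  have hVvN : Vv * N = 0 := by rw [hNdef, mul_sub, hVvTi, hVv2, sub_self]
  have p1 : S * N * S = S := by rw [hSN, sub_mul, one_mul, hVvS, sub_zero]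
  have p2 : N * S * N = N := by rw [hNS, sub_mul, one_mul, hVvN, sub_zero]
  have p3 : (S * N)ᵀ = S * N := by rw [hSN, transpose_sub, transpose_one, hVvT]
  have p4 : (N * S)ᵀ = N * S := by rw [hNS, transpose_sub, transpose_one, hVvT]
  have hex : ∃ N' : Matrix (Fin n) (Fin n) ℝ,
      S * N' * S = S ∧ N' * S * N' = N' ∧ (S * N')ᵀ = S * N' ∧ (N' * S)ᵀ = N' * S :=
    ⟨N, p1, p2, p3, p4⟩
  have hmp : mpinv S = N := by
    unfold mpinv
    rw [dif_pos hex]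
    obtain ⟨q1, q2, q3, q4⟩ := hex.choose_spec
    exact penrose_unique_s9 q1 q2 q3 q4 p1 p2 p3 p4
  set K : Matrix (Fin n) (Fin n) ℝ := gstar d L with hKdef
  have hK : K = Dh * N * Dh := by
    rw [hKdef]
    unfold gstar
    rw [← hDhdef, ← hSdef, hmp]
  have hLSD : L = Ds * S * Ds := by
    calc L = 1 * L * 1 := by rw [one_mul, mul_one]
    _ = (Ds * Dh) * L * (Dh * Ds) := by rw [hDsDh, hDhDs]
    _ = Ds * S * Ds := by rw [hSdef]; noncomm_ring
  have cancelDsDh : ∀ X : Matrix (Fin n) (Fin n) ℝ, Ds * (Dh * X) = X := fun X => by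
    rw [← mul_assoc, hDsDh, one_mul]
  have cancelDhDs : ∀ X : Matrix (Fin n) (Fin n) ℝ, Dh * (Ds * X) = X := fun X => by
    rw [← mul_assoc, hDhDs, one_mul]
  have hDsVvDh : Ds * Vv * Dh = m⁻¹ • vecMulVec d (fun _ => (1:ℝ)) := by
    rw [hVvdef, aux_mul_vecMulVec, aux_vecMulVec_mul]
    ext i j
    simp only [vecMulVec_apply, Matrix.smul_apply, smul_eq_mul, hDsdef, hDh, hvdef,
      mulVec_diagonal, vecMul_diagonal]
    have e : sd i * (sd i / sm) * (sd j / sm * (1 / sd j))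
        = (sd i * sd i) / (sm * sm) * (sd j / sd j) := by ring
    rw [e, hsd2, hsm2, div_self (hsd j).ne', mul_one, mul_one, div_eq_mul_inv, mul_comm]
  have hDhVvDs : Dh * Vv * Ds = m⁻¹ • vecMulVec (fun _ => (1:ℝ)) d := by
    rw [hVvdef, aux_mul_vecMulVec, aux_vecMulVec_mul]
    ext i j
    simp only [vecMulVec_apply, Matrix.smul_apply, smul_eq_mul, hDsdef, hDh, hvdef,
      mulVec_diagonal, vecMul_diagonal]
    have e : 1 / sd i * (sd i / sm) * (sd j / sm * sd j)
        = (sd j * sd j) / (sm * sm) * (sd i / sd i) := by ring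
    rw [e, hsd2, hsm2, div_self (hsd i).ne', mul_one, one_mul, div_eq_mul_inv, mul_comm]
  have hLK : L * K = 1 - m⁻¹ • vecMulVec d (fun _ => (1:ℝ)) := by
    rw [hLSD, hK]
    simp only [mul_assoc]
    rw [cancelDsDh (N * Dh), ← mul_assoc S N Dh, hSN, sub_mul, one_mul, mul_sub, hDsDh,
      ← mul_assoc Ds Vv Dh, hDsVvDh]
  have hKL : K * L = 1 - m⁻¹ • vecMulVec (fun _ => (1:ℝ)) d := by
    rw [hLSD, hK]
    simp only [mul_assoc]
    rw [cancelDhDs (S * Ds), ← mul_assoc N S Ds, hNS, sub_mul, one_mul, mul_sub, hDhDs,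
      ← mul_assoc Dh Vv Ds, hDhVvDs]
  -- final algebraic computation
  set Di : Matrix (Fin n) (Fin n) ℝ := Matrix.diagonal (fun i => (d i)⁻¹) with hDidef
  set J : Matrix (Fin n) (Fin n) ℝ := vecMulVec (fun _ => (1:ℝ)) (fun _ => (1:ℝ)) with hJdef
  have hDiD : Di * Matrix.diagonal d = 1 := by
    rw [hDidef, diagonal_mul_diagonal]
    have e : (fun i => (d i)⁻¹ * d i) = fun _ => (1:ℝ) :=
      funext fun i => inv_mul_cancel₀ (hdpos i).ne'
    rw [e, diagonal_one]
  have hDDi : Matrix.diagonal d * Di = 1 := by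
    rw [hDidef, diagonal_mul_diagonal]
    have e : (fun i => d i * (d i)⁻¹) = fun _ => (1:ℝ) :=
      funext fun i => mul_inv_cancel₀ (hdpos i).ne'
    rw [e, diagonal_one]
  have hDid : Di *ᵥ d = fun _ => (1:ℝ) := by
    funext i
    rw [hDidef, mulVec_diagonal]
    exact inv_mul_cancel₀ (hdpos i).ne'
  have hdDi : d ᵥ* Di = fun _ => (1:ℝ) := by
    funext i
    rw [hDidef, vecMul_diagonal]
    exact mul_inv_cancel₀ (hdpos i).ne'
  have hDiJ1 : Di * vecMulVec d (fun _ => (1:ℝ)) = J := by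
    rw [aux_mul_vecMulVec, hDid, hJdef]
  have hJ2Di : vecMulVec (fun _ => (1:ℝ)) d * Di = J := by
    rw [aux_vecMulVec_mul, hdDi, hJdef]
  have hJL : J * L = 0 := by
    rw [hJdef, aux_vecMulVec_mul, hLcol]
    ext i j; simp [vecMulVec_apply]
  have hA : A = Matrix.diagonal d - L := by rw [hLdef, sub_sub_cancel]
  have hDiA : Di * A = 1 - Di * L := by rw [hA, mul_sub, hDiD]
  have hADi : A * Di = 1 - L * Di := by rw [hA, sub_mul, hDDi]
  have hDiL : Di * L = 1 - Di * A := by rw [hLdef, mul_sub, hDiD]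
  have c1 : Di * A * K = K - Di + m⁻¹ • J := by
    rw [hDiA, sub_mul, one_mul, mul_assoc, hLK, mul_sub, mul_one, Matrix.mul_smul, hDiJ1]
    abel
  have k1 : K * (L * Di) = Di - m⁻¹ • J := by
    rw [← mul_assoc, hKL, sub_mul, one_mul, smul_mul_assoc, hJ2Di]
  have k2 : Di * (L * Di) = Di - Di * A * Di := by
    rw [← mul_assoc, hDiL, sub_mul, one_mul]
  have kJ : J * (L * Di) = 0 := by rw [← mul_assoc, hJL, zero_mul]
  have c2 : Di * A * K * A * Di = K - Di - Di * A * Di + (m⁻¹ + m⁻¹) • J := by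
    rw [mul_assoc (Di * A * K) A Di, c1, hADi, mul_sub, mul_one, add_mul, sub_mul,
      smul_mul_assoc, k1, k2, kJ, smul_zero, add_smul]
    abel
  rw [c2, two_mul, add_smul]
  abel
end

section
/- Variance bound for the fixed-effect estimator: for a connected weighted graph and homoskedastic errors u with mean 0 and variance σ²I_m, the estimator α̂ = (B'B)* B'u (plus the true α) satisfies σ²/d_i − 2σ²/m ≤ var(α̂_i) ≤ (σ²/d_i)(1 + 1/(λ₂ h_i)) − 2σ²/m, where h_i = (d_i^{−1} Σ_{j∈[i]} A_{ij}²/d_j)^{−1}. -/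
open Matrix BigOperators

lemma ctr {k l : ℕ} (M : Matrix (Fin k) (Fin l) ℝ) : Mᴴ = Mᵀ := by
  ext i j; simp [conjTranspose_apply]

lemma dp_transfer {n : ℕ} (M : Matrix (Fin n) (Fin n) ℝ) (a b : Fin n → ℝ) :
    a ⬝ᵥ (M *ᵥ b) = (Mᵀ *ᵥ a) ⬝ᵥ b := by
  rw [dotProduct_mulVec, mulVec_transpose]

lemma penrose_exists {n : ℕ} (M : Matrix (Fin n) (Fin n) ℝ) (hM : Mᵀ = M) :
    ∃ N : Matrix (Fin n) (Fin n) ℝ,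
      M * N * M = M ∧ N * M * N = N ∧ (M * N)ᵀ = M * N ∧ (N * M)ᵀ = N * M := by
  have hA : M.IsHermitian := by rw [Matrix.IsHermitian, ctr, hM]
  set U : Matrix (Fin n) (Fin n) ℝ := (Matrix.IsHermitian.eigenvectorUnitary hA : Matrix (Fin n) (Fin n) ℝ) with hUdef
  have hU1 : star U * U = 1 := Unitary.coe_star_mul_self _
  set μ : Fin n → ℝ := fun j => hA.eigenvalues j with hμ
  have hspec : M = U * Matrix.diagonal μ * star U := by
    have := hA.spectral_theorem
    simpa using this
  have key : ∀ f g : Fin n → ℝ, (U * Matrix.diagonal f * star U) * (U * Matrix.diagonal g * star U)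
      = U * Matrix.diagonal (fun j => f j * g j) * star U := by
    intro f g
    calc (U * Matrix.diagonal f * star U) * (U * Matrix.diagonal g * star U)
        = U * Matrix.diagonal f * (star U * U) * Matrix.diagonal g * star U := by
          simp only [Matrix.mul_assoc]
      _ = U * (Matrix.diagonal f * Matrix.diagonal g) * star U := by
          rw [hU1]; simp only [Matrix.mul_one, Matrix.mul_assoc]
      _ = U * Matrix.diagonal (fun j => f j * g j) * star U := by
          rw [Matrix.diagonal_mul_diagonal]
  have sym : ∀ f : Fin n → ℝ, (U * Matrix.diagonal f * star U)ᵀ = U * Matrix.diagonal f * star U := by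
    intro f
    rw [← ctr]
    rw [Matrix.conjTranspose_mul, Matrix.conjTranspose_mul, Matrix.star_eq_conjTranspose,
      Matrix.conjTranspose_conjTranspose, Matrix.diagonal_conjTranspose]
    simp [Matrix.mul_assoc, Matrix.star_eq_conjTranspose]
  refine ⟨U * Matrix.diagonal (fun j => (μ j)⁻¹) * star U, ?_, ?_, ?_, ?_⟩
  · rw [hspec, key, key]
    congr 1
    · congr 1; ext j; by_cases hj : μ j = 0 <;> field_simp [hj]
  · conv_lhs => rw [hspec]
    rw [key, key]
    congr 1
    · congr 1; ext j; by_cases hj : μ j = 0 <;> field_simp [hj]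
  · conv_lhs => rw [hspec, key]
    conv_rhs => rw [hspec, key]
    exact sym _
  · conv_lhs => rw [hspec, key]
    conv_rhs => rw [hspec, key]
    exact sym _

lemma penrose_unique_s12 {n : ℕ} (M N₁ N₂ : Matrix (Fin n) (Fin n) ℝ)
    (h1 : M * N₁ * M = M) (h2 : N₁ * M * N₁ = N₁) (h3 : (M * N₁)ᵀ = M * N₁) (h4 : (N₁ * M)ᵀ = N₁ * M)
    (g1 : M * N₂ * M = M) (g2 : N₂ * M * N₂ = N₂) (g3 : (M * N₂)ᵀ = M * N₂) (g4 : (N₂ * M)ᵀ = N₂ * M) :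
    N₁ = N₂ := by
  have e1 : M * N₁ = M * N₂ := by
    calc M * N₁ = (M * N₁)ᵀ := h3.symm
      _ = (M * N₂ * M * N₁)ᵀ := by rw [g1]
      _ = (M * N₂ * (M * N₁))ᵀ := by rw [Matrix.mul_assoc]
      _ = (M * N₁)ᵀ * (M * N₂)ᵀ := by rw [Matrix.transpose_mul]
      _ = M * N₁ * (M * N₂) := by rw [h3, g3]
      _ = M * N₁ * M * N₂ := by simp only [Matrix.mul_assoc]
      _ = M * N₂ := by rw [h1]
  have e2 : N₁ * M = N₂ * M := by
    calc N₁ * M = (N₁ * M)ᵀ := h4.symm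
      _ = (N₁ * (M * N₂ * M))ᵀ := by rw [g1]
      _ = ((N₁ * M) * (N₂ * M))ᵀ := by simp only [Matrix.mul_assoc]
      _ = (N₂ * M)ᵀ * (N₁ * M)ᵀ := by rw [Matrix.transpose_mul]
      _ = N₂ * M * (N₁ * M) := by rw [h4, g4]
      _ = N₂ * (M * N₁ * M) := by simp only [Matrix.mul_assoc]
      _ = N₂ * M := by rw [h1]
  calc N₁ = N₁ * M * N₁ := h2.symm
    _ = N₁ * (M * N₂) := by rw [Matrix.mul_assoc, e1]
    _ = N₂ * M * N₂ := by rw [← Matrix.mul_assoc, e2]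
    _ = N₂ := g2

lemma mpinv_spec {n : ℕ} (M : Matrix (Fin n) (Fin n) ℝ) (hM : Mᵀ = M) :
    M * mpinv M * M = M ∧ mpinv M * M * mpinv M = mpinv M ∧
      (M * mpinv M)ᵀ = M * mpinv M ∧ (mpinv M * M)ᵀ = mpinv M * M := by
  have hex := penrose_exists M hM
  rw [mpinv, dif_pos hex]
  exact hex.choose_spec

set_option maxHeartbeats 4000000 in
lemma stmt12_aux {n : ℕ} (A : Matrix (Fin n) (Fin n) ℝ) (hsym : Aᵀ = A)
    (hnn : ∀ i j, 0 ≤ A i j) (hdiag : ∀ i, A i i = 0)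
    (d : Fin n → ℝ) (hdeg : ∀ i, d i = ∑ j, A i j) (hdpos : ∀ i, 0 < d i)
    (hconn : Conn A)
    (S : Matrix (Fin n) (Fin n) ℝ)
    (hS : S = 1 - dhalfInv d * A * dhalfInv d)
    (lam2 : ℝ) (hlampos : 0 < lam2)
    (hlam : IsLeast {r : ℝ | ∃ x : Fin n → ℝ, x ≠ 0 ∧
        (fun i => Real.sqrt (d i)) ⬝ᵥ x = 0 ∧ r = (x ⬝ᵥ (S *ᵥ x)) / (x ⬝ᵥ x)} lam2)
    (h : Fin n → ℝ) (hh : ∀ i, h i = ((d i)⁻¹ * ∑ j, (A i j) ^ 2 / d j)⁻¹)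
    (σ2 : ℝ) (hσ : 0 ≤ σ2) (i : Fin n) :
    σ2 / d i - 2 * σ2 / (∑ k, d k) ≤ σ2 * gstar d (Matrix.diagonal d - A) i i ∧
    σ2 * gstar d (Matrix.diagonal d - A) i i ≤
      σ2 / d i * (1 + 1 / (lam2 * h i)) - 2 * σ2 / (∑ k, d k) := by
  -- setup
  set v : Fin n → ℝ := fun j => Real.sqrt (d j) with hvdef
  have hvpos : ∀ j, 0 < v j := fun j => Real.sqrt_pos.mpr (hdpos j)
  have hvne : ∀ j, v j ≠ 0 := fun j => (hvpos j).ne'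
  have hvv : ∀ j, v j * v j = d j := fun j => Real.mul_self_sqrt (hdpos j).le
  set m : ℝ := ∑ k, d k with hmdef
  have hm : 0 < m := Finset.sum_pos (fun k _ => hdpos k) ⟨i, Finset.mem_univ i⟩
  set Mh : Matrix (Fin n) (Fin n) ℝ := dhalfInv d * A * dhalfInv d with hMhdef
  have hMhapp : ∀ j k, Mh j k = (1 / v j) * A j k * (1 / v k) := by
    intro j k
    rw [hMhdef, dhalfInv, Matrix.mul_diagonal, Matrix.diagonal_mul]
  have hMhsym : Mhᵀ = Mh := by
    rw [hMhdef, dhalfInv]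
    rw [Matrix.transpose_mul, Matrix.transpose_mul, Matrix.diagonal_transpose, hsym]
    rw [Matrix.mul_assoc]
  have hSsym : Sᵀ = S := by
    rw [hS, Matrix.transpose_sub, Matrix.transpose_one, hMhsym]
  -- S' = S
  have hS' : dhalfInv d * (Matrix.diagonal d - A) * dhalfInv d = S := by
    rw [Matrix.mul_sub, Matrix.sub_mul, hS, ← hMhdef]
    congr 1
    rw [dhalfInv, Matrix.diagonal_mul_diagonal, Matrix.diagonal_mul_diagonal]
    have heq : (fun j => 1 / Real.sqrt (d j) * d j * (1 / Real.sqrt (d j))) = fun _ : Fin n => (1:ℝ) := by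
      funext j
      have hs2 : Real.sqrt (d j) * Real.sqrt (d j) = d j := Real.mul_self_sqrt (hdpos j).le
      rw [div_mul_eq_mul_div, one_mul, div_mul_div_comm, mul_one, hs2, div_self (hdpos j).ne']
    rw [heq, Matrix.diagonal_one]
  -- Mh v = v
  have hMhv : Mh *ᵥ v = v := by
    funext j
    simp only [Matrix.mulVec, dotProduct]
    have : ∀ k, Mh j k * v k = A j k / v j := by
      intro k
      rw [hMhapp]
      field_simp
      rw [mul_div_mul_right _ _ (hvne k)]
    simp only [this]
    rw [← Finset.sum_div, ← hdeg j]
    rw [div_eq_iff (hvne j)]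
    exact (hvv j).symm
  have hSv : S *ᵥ v = 0 := by
    rw [hS, Matrix.sub_mulVec, Matrix.one_mulVec, hMhv, sub_self]
  have hAs : ∀ a b, A b a = A a b := fun a b => congrFun (congrFun hsym a) b
  -- kernel of S
  have hker : ∀ x : Fin n → ℝ, S *ᵥ x = 0 → ∃ c : ℝ, x = c • v := by
    intro x hx
    set w : Fin n → ℝ := fun j => x j / v j with hwdef
    have hxw : ∀ j, x j = v j * w j := by
      intro j; rw [hwdef]; field_simp
      exact (mul_div_cancel_right₀ (x j) (hvne j)).symm
    have e1 : x ⬝ᵥ x = ∑ j, ∑ k, A j k * w j ^ 2 := by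
      rw [dotProduct]
      apply Finset.sum_congr rfl
      intro j _
      rw [← Finset.sum_mul, ← hdeg j, hxw j, ← hvv j]
      ring
    have e2 : x ⬝ᵥ (Mh *ᵥ x) = ∑ j, ∑ k, A j k * (w j * w k) := by
      simp only [dotProduct, Matrix.mulVec, Finset.mul_sum]
      apply Finset.sum_congr rfl; intro j _
      apply Finset.sum_congr rfl; intro k _
      rw [hMhapp, hxw j, hxw k]
      have hgen : ∀ (a b c p q : ℝ), a ≠ 0 → b ≠ 0 →
          (a*p) * (1/a * c * (1/b) * (b*q)) = c * (p*q) := by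
        intros a b c p q ha hb; field_simp
      exact hgen _ _ _ _ _ (hvne j) (hvne k)
    have swap : ∑ j, ∑ k, A j k * w k ^ 2 = ∑ j, ∑ k, A j k * w j ^ 2 := by
      rw [Finset.sum_comm]
      apply Finset.sum_congr rfl; intro j _
      apply Finset.sum_congr rfl; intro k _
      rw [hAs]
    have hsum : ∑ j, ∑ k, A j k * (w j - w k)^2
        = ∑ j, ∑ k, (A j k * w j^2 + A j k * w k^2 - 2*(A j k * (w j * w k))) := by
      apply Finset.sum_congr rfl; intro j _
      apply Finset.sum_congr rfl; intro k _
      ring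
    have hsplit : ∑ j, ∑ k, (A j k * w j^2 + A j k * w k^2 - 2*(A j k * (w j * w k)))
        = (∑ j, ∑ k, A j k * w j^2) + (∑ j, ∑ k, A j k * w k^2)
          - 2 * ∑ j, ∑ k, A j k * (w j * w k) := by
      simp only [Finset.sum_add_distrib, Finset.sum_sub_distrib, Finset.mul_sum]
    have hq : x ⬝ᵥ (S *ᵥ x) = (1/2) * ∑ j, ∑ k, A j k * (w j - w k)^2 := by
      have e0 : x ⬝ᵥ (S *ᵥ x)
          = (∑ j, ∑ k, A j k * w j ^ 2) - ∑ j, ∑ k, A j k * (w j * w k) := by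
        rw [hS, Matrix.sub_mulVec, Matrix.one_mulVec, dotProduct_sub, e1, e2]
      rw [e0, hsum, hsplit, swap]
      ring
    have hzero : ∑ j, ∑ k, A j k * (w j - w k)^2 = 0 := by
      have hx0 : x ⬝ᵥ (S *ᵥ x) = 0 := by rw [hx, dotProduct_zero]
      rw [hq] at hx0
      linarith
    have hterm : ∀ j k, A j k * (w j - w k)^2 = 0 := by
      have hnonneg : ∀ j k, 0 ≤ A j k * (w j - w k)^2 :=
        fun j k => mul_nonneg (hnn j k) (sq_nonneg _)
      intro j k
      have houter := (Finset.sum_eq_zero_iff_of_nonneg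
        (fun j _ => Finset.sum_nonneg (fun k _ => hnonneg j k))).mp hzero j (Finset.mem_univ j)
      exact (Finset.sum_eq_zero_iff_of_nonneg
        (fun k _ => hnonneg j k)).mp houter k (Finset.mem_univ k)
    have hwstep : ∀ j k, A j k ≠ 0 → w j = w k := by
      intro j k hA
      have := hterm j k
      rcases mul_eq_zero.mp this with h1 | h2
      · exact absurd h1 hA
      · exact sub_eq_zero.mp ((pow_eq_zero_iff two_ne_zero).mp h2)
    have hwc : ∀ j, w j = w i := by
      intro j
      induction hconn i j with
      | refl => rfl
      | tail hab hbc ih => exact ((hwstep _ _ hbc).symm).trans ih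
    refine ⟨w i, ?_⟩
    funext j
    rw [hxw j, hwc j]
    simp [smul_eq_mul]
    ring
  clear_value v m Mh
  have hds : ∀ u : Fin n → ℝ, 0 ≤ u ⬝ᵥ u := fun u => Finset.sum_nonneg (fun k _ => mul_self_nonneg _)
  have hvvm : v ⬝ᵥ v = m := by
    rw [dotProduct, hmdef]
    exact Finset.sum_congr rfl (fun j _ => hvv j)
  obtain ⟨N, hNdef⟩ : ∃ N : Matrix (Fin n) (Fin n) ℝ, N = mpinv S := ⟨_, rfl⟩
  obtain ⟨p1, p2, p3, p4⟩ := mpinv_spec S hSsym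
  rw [← hNdef] at p1 p2 p3 p4
  have hNsym : Nᵀ = N := by
    have c1 : S * Nᵀ * S = S := by
      have t := congrArg Matrix.transpose p1
      rw [Matrix.transpose_mul, Matrix.transpose_mul, hSsym, ← Matrix.mul_assoc] at t
      exact t
    have c2 : Nᵀ * S * Nᵀ = Nᵀ := by
      have t := congrArg Matrix.transpose p2
      rw [Matrix.transpose_mul, Matrix.transpose_mul, hSsym, ← Matrix.mul_assoc] at t
      exact t
    have e3 : S * Nᵀ = N * S := by rw [← p4, Matrix.transpose_mul, hSsym]
    have e4 : Nᵀ * S = S * N := by rw [← p3, Matrix.transpose_mul, hSsym]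
    have c3 : (S * Nᵀ)ᵀ = S * Nᵀ := by rw [e3]; exact p4
    have c4 : (Nᵀ * S)ᵀ = Nᵀ * S := by rw [e4]; exact p3
    exact penrose_unique_s12 S Nᵀ N c1 c2 c3 c4 p1 p2 p3 p4
  have hSN : S * N = N * S := by
    rw [← p4, Matrix.transpose_mul, hSsym, hNsym]
  have hNSN : (N * S) * N = N := by rw [Matrix.mul_assoc, ← Matrix.mul_assoc]; exact p2
  have hPapp : ∀ x : Fin n → ℝ, (N * S) *ᵥ x = x - ((v ⬝ᵥ x) / m) • v := by
    intro x
    have hker0 : S *ᵥ (x - (N * S) *ᵥ x) = 0 := by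
      rw [Matrix.mulVec_sub, Matrix.mulVec_mulVec, ← Matrix.mul_assoc, p1, sub_self]
    obtain ⟨c, hc⟩ := hker _ hker0
    have hvP : v ⬝ᵥ ((N * S) *ᵥ x) = 0 := by
      rw [dp_transfer, p4, ← Matrix.mulVec_mulVec, hSv, Matrix.mulVec_zero, zero_dotProduct]
    have hcv : v ⬝ᵥ (x - (N * S) *ᵥ x) = c * m := by
      rw [hc, dotProduct_smul, hvvm, smul_eq_mul]
    rw [dotProduct_sub, hvP, sub_zero] at hcv
    have : x - (N * S) *ᵥ x = ((v ⬝ᵥ x) / m) • v := by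
      rw [hc, hcv]
      congr 1
      field_simp
    rw [← this, sub_sub_cancel]
  have hPv : (N * S) *ᵥ v = 0 := by
    rw [hPapp v, hvvm, div_self hm.ne', one_smul, sub_self]
  have hNv : N *ᵥ v = 0 := by
    have e : N * (S * N) = N := by rw [← Matrix.mul_assoc]; exact p2
    calc N *ᵥ v = (N * (S * N)) *ᵥ v := by rw [e]
      _ = (N * (N * S)) *ᵥ v := by rw [hSN]
      _ = N *ᵥ ((N * S) *ᵥ v) := by rw [← Matrix.mulVec_mulVec]
      _ = 0 := by rw [hPv, Matrix.mulVec_zero]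
  have hNuv : ∀ x, v ⬝ᵥ (N *ᵥ x) = 0 := by
    intro x
    rw [dp_transfer, hNsym, hNv, zero_dotProduct]
  have hqrep : ∀ x, x ⬝ᵥ (N *ᵥ x) = (N *ᵥ x) ⬝ᵥ (S *ᵥ (N *ᵥ x)) := by
    intro x
    have e : (S * N)ᵀ = N * S := by rw [Matrix.transpose_mul, hSsym, hNsym]
    calc x ⬝ᵥ (N *ᵥ x) = (N *ᵥ x) ⬝ᵥ x := dotProduct_comm _ _
      _ = (((S * N)ᵀ) *ᵥ (N *ᵥ x)) ⬝ᵥ x := by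
          rw [e, Matrix.mulVec_mulVec, hNSN]
      _ = (N *ᵥ x) ⬝ᵥ ((S * N) *ᵥ x) := (dp_transfer _ _ _).symm
      _ = (N *ᵥ x) ⬝ᵥ (S *ᵥ (N *ᵥ x)) := by rw [Matrix.mulVec_mulVec]
  have hqlow : ∀ x : Fin n → ℝ, lam2 * ((N *ᵥ x) ⬝ᵥ (N *ᵥ x)) ≤ x ⬝ᵥ (N *ᵥ x) := by
    intro x
    by_cases hu : N *ᵥ x = 0
    · rw [hu]
      simp
    · have hmem : ((N *ᵥ x) ⬝ᵥ (S *ᵥ (N *ᵥ x))) / ((N *ᵥ x) ⬝ᵥ (N *ᵥ x)) ∈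
          {r : ℝ | ∃ y : Fin n → ℝ, y ≠ 0 ∧ v ⬝ᵥ y = 0 ∧ r = (y ⬝ᵥ (S *ᵥ y)) / (y ⬝ᵥ y)} :=
        ⟨N *ᵥ x, hu, hNuv x, rfl⟩
      have hlb := hlam.2 hmem
      have hpos : 0 < (N *ᵥ x) ⬝ᵥ (N *ᵥ x) :=
        lt_of_le_of_ne (hds _) (fun hcon => hu (dotProduct_self_eq_zero.mp hcon.symm))
      rw [le_div_iff₀ hpos] at hlb
      rw [hqrep]
      linarith
  have hqnn : ∀ x, 0 ≤ x ⬝ᵥ (N *ᵥ x) :=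
    fun x => le_trans (mul_nonneg hlampos.le (hds _)) (hqlow x)
  have hbil : ∀ a b : Fin n → ℝ, a ⬝ᵥ (N *ᵥ b) = b ⬝ᵥ (N *ᵥ a) := by
    intro a b
    rw [dp_transfer, hNsym, dotProduct_comm, dp_transfer, hNsym]
  have hCS : ∀ a b : Fin n → ℝ, (a ⬝ᵥ (N *ᵥ b))^2 ≤ (a ⬝ᵥ (N *ᵥ a)) * (b ⬝ᵥ (N *ᵥ b)) := by
    intro a b
    have hquad : ∀ t : ℝ, 0 ≤ (a ⬝ᵥ (N *ᵥ a)) * (t*t) + (2 * (a ⬝ᵥ (N *ᵥ b))) * t + (b ⬝ᵥ (N *ᵥ b)) := by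
      intro t
      have hnn' := hqnn (t • a + b)
      have hexp : (t • a + b) ⬝ᵥ (N *ᵥ (t • a + b))
          = (a ⬝ᵥ (N *ᵥ a)) * (t*t) + (2 * (a ⬝ᵥ (N *ᵥ b))) * t + (b ⬝ᵥ (N *ᵥ b)) := by
        rw [Matrix.mulVec_add, Matrix.mulVec_smul, dotProduct_add, add_dotProduct, add_dotProduct,
          smul_dotProduct, dotProduct_smul, smul_dotProduct, dotProduct_smul, hbil b a]
        simp only [smul_eq_mul]
        ring
      rw [hexp] at hnn'
      exact hnn'
    have hd := discrim_le_zero hquad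
    rw [discrim] at hd
    nlinarith [hd]
  -- scalar computations with the basis vector at i
  obtain ⟨ei, hedef⟩ : ∃ ei : Fin n → ℝ, ei = Pi.single i 1 := ⟨_, rfl⟩
  have hve : v ⬝ᵥ ei = v i := by rw [hedef, dotProduct_single, mul_one]
  have hee : ei ⬝ᵥ ei = 1 := by rw [hedef, single_dotProduct, one_mul, Pi.single_eq_same]
  have hev : ei ⬝ᵥ v = v i := by rw [hedef, single_dotProduct, one_mul]
  obtain ⟨y, hydef⟩ : ∃ y : Fin n → ℝ, y = ei - ((v i)/m) • v := ⟨_, rfl⟩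
  have hy : (N * S) *ᵥ ei = y := by rw [hPapp ei, hve, hydef]
  have hvy : v ⬝ᵥ y = 0 := by
    rw [hydef, dotProduct_sub, dotProduct_smul, hvvm, hve, smul_eq_mul]
    field_simp
    ring
  have hyy : y ⬝ᵥ y = 1 - d i / m := by
    rw [hydef]
    simp only [dotProduct_sub, sub_dotProduct, dotProduct_smul, smul_dotProduct, smul_eq_mul,
      hee, hev, hve, hvvm]
    have hd2 := hvv i
    field_simp
    ring_nf
    nlinarith [hd2]
  have hSe : S *ᵥ y = S *ᵥ ei := by
    rw [hydef, Matrix.mulVec_sub, Matrix.mulVec_smul, hSv, smul_zero, sub_zero]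
  have heSe : ei ⬝ᵥ (S *ᵥ ei) = 1 := by
    have hSii : S i i = 1 := by
      rw [hS]
      simp [Matrix.sub_apply, Matrix.one_apply_eq, hMhapp, hdiag i]
    rw [hedef, Matrix.mulVec_single, single_dotProduct]
    simp [hSii]
  have hvSe : v ⬝ᵥ (S *ᵥ ei) = 0 := by
    rw [dp_transfer, hSsym, hSv, zero_dotProduct]
  have hySy : y ⬝ᵥ (S *ᵥ y) = 1 := by
    rw [hSe, hydef, sub_dotProduct, smul_dotProduct, hvSe, heSe]
    simp
  have hNSy : N *ᵥ (S *ᵥ y) = y := by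
    rw [Matrix.mulVec_mulVec, hPapp y, hvy]
    simp
  have e2 : N * (N * S) = N := by rw [← hSN, ← Matrix.mul_assoc]; exact p2
  have hNy : N *ᵥ y = N *ᵥ ei := by rw [← hy, Matrix.mulVec_mulVec, e2]
  have hNii : N i i = y ⬝ᵥ (N *ᵥ y) := by
    have h3 : ei ⬝ᵥ (N *ᵥ ei) = N i i := by
      rw [hedef, Matrix.mulVec_single, single_dotProduct]
      simp
    rw [hNy, hbil y ei, hNy, h3]
  have hlow : 1 - 2 * (d i / m) ≤ N i i := by
    have hcs := hCS y (S *ᵥ y)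
    have h2 : (S *ᵥ y) ⬝ᵥ y = 1 := by
      rw [dotProduct_comm]
      exact hySy
    rw [hNSy, h2, mul_one, hyy] at hcs
    rw [hNii]
    nlinarith [sq_nonneg (d i / m), hcs]
  -- upper bound
  obtain ⟨z, hzdef⟩ : ∃ z : Fin n → ℝ, z = y - S *ᵥ y := ⟨_, rfl⟩
  have hzNz : z ⬝ᵥ (N *ᵥ z) = y ⬝ᵥ (N *ᵥ y) - 2 * (y ⬝ᵥ y) + 1 := by
    have t1 : y ⬝ᵥ (N *ᵥ (S *ᵥ y)) = y ⬝ᵥ y := by rw [hNSy]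
    have t2 : (S *ᵥ y) ⬝ᵥ (N *ᵥ y) = y ⬝ᵥ y := by rw [hbil, t1]
    have t3 : (S *ᵥ y) ⬝ᵥ (N *ᵥ (S *ᵥ y)) = 1 := by
      rw [hNSy, dotProduct_comm]
      exact hySy
    rw [hzdef, Matrix.mulVec_sub, dotProduct_sub, sub_dotProduct, sub_dotProduct, t1, t2, t3]
    ring
  have hze : z = Mh *ᵥ ei - ((v i)/m) • v := by
    rw [hzdef, hSe, hydef, hS, Matrix.sub_mulVec, Matrix.one_mulVec]
    abel
  have hgg : (Mh *ᵥ ei) ⬝ᵥ (Mh *ᵥ ei) = (∑ j, A i j ^ 2 / d j) / d i := by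
    rw [hedef, Matrix.mulVec_single, dotProduct, Finset.sum_div]
    apply Finset.sum_congr rfl
    intro j _
    change Mh j i * 1 * (Mh j i * 1) = _
    rw [hMhapp, hAs i j, ← hvv j, ← hvv i]
    have hgen2 : ∀ a b c : ℝ, b ≠ 0 → c ≠ 0 →
        1/b * a * (1/c) * 1 * (1/b * a * (1/c) * 1) = a^2/(b*b)/(c*c) := by
      intros a b c hb hc
      field_simp
    exact hgen2 _ _ _ (hvne j) (hvne i)
  have hvg : v ⬝ᵥ (Mh *ᵥ ei) = v i := by
    rw [dp_transfer, hMhsym, hMhv, hve]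
  have hgv : (Mh *ᵥ ei) ⬝ᵥ v = v i := by rw [dotProduct_comm]; exact hvg
  have hzz : z ⬝ᵥ z = (∑ j, A i j ^ 2 / d j) / d i - d i / m := by
    rw [hze]
    simp only [dotProduct_sub, sub_dotProduct, dotProduct_smul, smul_dotProduct, smul_eq_mul,
      hgg, hvg, hgv, hvvm]
    have hd2 := hvv i
    field_simp
    ring_nf
    nlinarith [hd2, show d i ^ 2 * (d i)⁻¹ = d i by field_simp, show v i ^ 2 = d i by rw [sq]; exact hd2]
  have hzup : z ⬝ᵥ (N *ᵥ z) ≤ (z ⬝ᵥ z) / lam2 := by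
    have hcs : (z ⬝ᵥ (N *ᵥ z))^2 ≤ (z ⬝ᵥ z) * ((N *ᵥ z) ⬝ᵥ (N *ᵥ z)) := by
      have h0 := Finset.sum_mul_sq_le_sq_mul_sq Finset.univ z (N *ᵥ z)
      simp only [dotProduct, pow_two] at h0 ⊢
      exact h0
    have hl := hqlow z
    have hnnz := hqnn z
    rcases eq_or_lt_of_le hnnz with h0 | hpos
    · rw [← h0]
      exact div_nonneg (hds z) hlampos.le
    · rw [le_div_iff₀ hlampos]
      nlinarith [hds z, hds (N *ᵥ z)]
  have hup : N i i ≤ 1 - 2 * (d i / m) + ((∑ j, A i j ^ 2 / d j) / d i) / lam2 := by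
    have hnn2 : 0 ≤ (d i / m) / lam2 :=
      div_nonneg (div_nonneg (hdpos i).le hm.le) hlampos.le
    have hthis := hzup
    rw [hzz] at hthis
    rw [hNii]
    have hid : y ⬝ᵥ (N *ᵥ y) = z ⬝ᵥ (N *ᵥ z) + 2 * (y ⬝ᵥ y) - 1 := by rw [hzNz]; ring
    rw [hid, hyy]
    rw [sub_div] at hthis
    linarith
  have hsq : Real.sqrt (d i) * Real.sqrt (d i) = d i := Real.mul_self_sqrt (hdpos i).le
  have hgst : gstar d (Matrix.diagonal d - A) i i = N i i / d i := by
    simp only [gstar]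
    rw [hS', ← hNdef]
    simp only [dhalfInv]
    rw [Matrix.mul_diagonal, Matrix.diagonal_mul]
    rw [one_div_mul_eq_div, div_mul_div_comm, mul_one, hsq]
  have hW : 1/(lam2 * h i) = ((∑ j, A i j^2/d j) / d i) / lam2 := by
    rw [hh i, one_div, mul_inv, inv_inv]
    ring
  have hdm : d i ≠ 0 := (hdpos i).ne'
  constructor
  · rw [hgst]
    have h1 : σ2 * ((1 - 2*(d i/m)) / d i) ≤ σ2 * (N i i / d i) := by
      gcongr
      exact (hdpos i).le
    calc σ2 / d i - 2 * σ2 / m = σ2 * ((1 - 2*(d i/m)) / d i) := by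
          field_simp
      _ ≤ σ2 * (N i i / d i) := h1
  · rw [hgst, hW]
    have h2 : σ2 * (N i i / d i)
        ≤ σ2 * ((1 - 2*(d i/m) + ((∑ j, A i j ^2/d j)/d i)/lam2) / d i) := by
      gcongr
      exact (hdpos i).le
    calc σ2 * (N i i / d i)
        ≤ σ2 * ((1 - 2*(d i/m) + ((∑ j, A i j ^2/d j)/d i)/lam2) / d i) := h2
      _ = σ2 / d i * (1 + ((∑ j, A i j ^2/d j)/d i)/lam2) - 2 * σ2 / m := by
          field_simp
          ring








/-- variance bound for the fixed-effect estimator with homoskedastic errors: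
`σ²/dᵢ - 2σ²/m ≤ var(α̂ᵢ) = σ² (L*)ᵢᵢ ≤ (σ²/dᵢ)(1 + 1/(λ₂ hᵢ)) - 2σ²/m`, `m = Σᵢ dᵢ`. -/
theorem stmt12 {n : ℕ} (A : Matrix (Fin n) (Fin n) ℝ) (hsym : Aᵀ = A)
    (hnn : ∀ i j, 0 ≤ A i j) (hdiag : ∀ i, A i i = 0)
    (d : Fin n → ℝ) (hdeg : ∀ i, d i = ∑ j, A i j) (hdpos : ∀ i, 0 < d i)
    (hconn : Conn A)
    (S : Matrix (Fin n) (Fin n) ℝ)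
    (hS : S = 1 - dhalfInv d * A * dhalfInv d)
    (lam2 : ℝ) (hlampos : 0 < lam2)
    (hlam : IsLeast {r : ℝ | ∃ x : Fin n → ℝ, x ≠ 0 ∧
        (fun i => Real.sqrt (d i)) ⬝ᵥ x = 0 ∧ r = (x ⬝ᵥ (S *ᵥ x)) / (x ⬝ᵥ x)} lam2)
    (h : Fin n → ℝ) (hh : ∀ i, h i = ((d i)⁻¹ * ∑ j, (A i j) ^ 2 / d j)⁻¹)
    (σ2 : ℝ) (hσ : 0 ≤ σ2) (i : Fin n) :
    σ2 / d i - 2 * σ2 / (∑ k, d k) ≤ σ2 * gstar d (Matrix.diagonal d - A) i i ∧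
    σ2 * gstar d (Matrix.diagonal d - A) i i ≤
      σ2 / d i * (1 + 1 / (lam2 * h i)) - 2 * σ2 / (∑ k, d k) := by
  exact stmt12_aux A hsym hnn hdiag d hdeg hdpos hconn S hS lam2 hlampos hlam h hh σ2 hσ i
end

section
/- Under the alternative normalization Σ_i α_i = 0, the variance of the fixed-effect estimator satisfies var(α̂°_i) = σ² (L†)_{ii} ≤ (σ²/(λ₂ d_i))(1 + d_i/(n h)), where h is the harmonic mean of the degrees. -/
open Matrix BigOperators

lemma exists_penrose {n : ℕ} (M : Matrix (Fin n) (Fin n) ℝ) (hM : M.IsHermitian) :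
    ∃ N : Matrix (Fin n) (Fin n) ℝ,
      M * N * M = M ∧ N * M * N = N ∧ (M * N)ᵀ = M * N ∧ (N * M)ᵀ = N * M := by
  classical
  set U : Matrix (Fin n) (Fin n) ℝ := (hM.eigenvectorUnitary : Matrix (Fin n) (Fin n) ℝ) with hU
  have hU1 : star U * U = 1 := by
    exact Unitary.star_mul_self_of_mem hM.eigenvectorUnitary.2
  set f : Fin n → ℝ := hM.eigenvalues with hf
  have hspec : M = U * Matrix.diagonal f * star U := by
    have := hM.spectral_theorem
    have hco : (RCLike.ofReal ∘ f : Fin n → ℝ) = f := by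
      funext k; simp [Function.comp]
    rw [hco] at this
    exact this
  have key : ∀ F G : Fin n → ℝ,
      (U * Matrix.diagonal F * star U) * (U * Matrix.diagonal G * star U)
        = U * Matrix.diagonal (fun k => F k * G k) * star U := by
    intro F G
    calc (U * Matrix.diagonal F * star U) * (U * Matrix.diagonal G * star U)
        = U * (Matrix.diagonal F * (star U * U) * Matrix.diagonal G) * star U := by
          simp only [Matrix.mul_assoc]
      _ = U * Matrix.diagonal (fun k => F k * G k) * star U := by
          rw [hU1, Matrix.mul_one, Matrix.diagonal_mul_diagonal]
  have hsymm : ∀ F : Fin n → ℝ,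
      (U * Matrix.diagonal F * star U)ᵀ = U * Matrix.diagonal F * star U := by
    intro F
    have hstar : star U = Uᵀ := by
      rw [Matrix.star_eq_conjTranspose, Matrix.conjTranspose_eq_transpose_of_trivial]
    rw [hstar, Matrix.transpose_mul, Matrix.transpose_mul, Matrix.transpose_transpose,
      Matrix.diagonal_transpose, Matrix.mul_assoc]
  refine ⟨U * Matrix.diagonal (fun k => (f k)⁻¹) * star U, ?_, ?_, ?_, ?_⟩
  · rw [hspec, key, key]
    congr 2
    funext k
    by_cases hk : f k = 0 <;> field_simp [hk]
  · rw [hspec, key, key]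
    congr 2
    funext k
    by_cases hk : f k = 0 <;> field_simp [hk]
  · rw [hspec, key]; exact hsymm _
  · rw [hspec, key]; exact hsymm _

lemma mpinv_penrose {n : ℕ} {M : Matrix (Fin n) (Fin n) ℝ} (hM : M.IsHermitian) :
    M * mpinv M * M = M ∧ mpinv M * M * mpinv M = mpinv M ∧
      (M * mpinv M)ᵀ = M * mpinv M ∧ (mpinv M * M)ᵀ = mpinv M * M := by
  have hex := exists_penrose M hM
  rw [mpinv, dif_pos hex]
  exact hex.choose_spec

/-- under the normalization `Σᵢ αᵢ = 0`,
`var(α̂°ᵢ) = σ² (L†)ᵢᵢ ≤ (σ²/(λ₂ dᵢ))(1 + dᵢ/(n h))`. -/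
theorem stmt16 {n : ℕ} (A : Matrix (Fin n) (Fin n) ℝ) (hsym : Aᵀ = A)
    (hnn : ∀ i j, 0 ≤ A i j) (hdiag : ∀ i, A i i = 0)
    (d : Fin n → ℝ) (hdeg : ∀ i, d i = ∑ j, A i j) (hdpos : ∀ i, 0 < d i)
    (hconn : Conn A)
    (S : Matrix (Fin n) (Fin n) ℝ)
    (hS : S = 1 - dhalfInv d * A * dhalfInv d)
    (lam2 : ℝ) (hlampos : 0 < lam2)
    (hlam : IsLeast {r : ℝ | ∃ x : Fin n → ℝ, x ≠ 0 ∧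
        (fun i => Real.sqrt (d i)) ⬝ᵥ x = 0 ∧ r = (x ⬝ᵥ (S *ᵥ x)) / (x ⬝ᵥ x)} lam2)
    (h : ℝ) (hh : h = (((n : ℝ))⁻¹ * ∑ j, (d j)⁻¹)⁻¹)
    (σ2 : ℝ) (hσ : 0 ≤ σ2) (i : Fin n) :
    σ2 * mpinv (Matrix.diagonal d - A) i i ≤
      σ2 / (lam2 * d i) * (1 + d i / (n * h)) := by
  classical
  have hn : 0 < n := i.pos
  have hnR : (0:ℝ) < n := by exact_mod_cast hn
  set T : ℝ := ∑ j, (d j)⁻¹ with hT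
  have hTpos : 0 < T := Finset.sum_pos (fun j _ => inv_pos.mpr (hdpos j)) ⟨i, Finset.mem_univ i⟩
  set L : Matrix (Fin n) (Fin n) ℝ := Matrix.diagonal d - A with hL
  have hLsym : Lᵀ = L := by rw [hL, Matrix.transpose_sub, Matrix.diagonal_transpose, hsym]
  have hLherm : L.IsHermitian := by
    rw [Matrix.IsHermitian, Matrix.conjTranspose_eq_transpose_of_trivial, hLsym]
  have hLe : ∀ k l, L k l = (if k = l then d k else 0) - A k l := by
    intro k l; rw [hL]; simp [Matrix.sub_apply, Matrix.diagonal_apply]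
  have hAsymm : ∀ k l, A l k = A k l := by
    intro k l; rw [← Matrix.transpose_apply A k l, hsym]
  have hrow : ∀ k, ∑ l, L k l = 0 := by
    intro k
    simp only [hLe]
    rw [Finset.sum_sub_distrib]
    simp [Finset.sum_ite_eq, ← hdeg k]
  have hcol : ∀ l, ∑ k, L k l = 0 := by
    intro l
    calc ∑ k, L k l = ∑ k, L l k := by
          refine Finset.sum_congr rfl fun k _ => ?_
          rw [← Matrix.transpose_apply L l k, hLsym]
      _ = 0 := hrow l
  set vone : Fin n → ℝ := fun _ => 1 with hvone
  have honeL : L *ᵥ vone = 0 := by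
    funext k
    simp only [Matrix.mulVec, dotProduct, hvone, mul_one, Pi.zero_apply]
    exact hrow k
  have hLone : vone ᵥ* L = 0 := by
    funext l
    simp only [Matrix.vecMul, dotProduct, hvone, one_mul, Pi.zero_apply]
    exact hcol l
  -- quadratic form identity
  have e2 : ∀ y : Fin n → ℝ,
      y ⬝ᵥ (L *ᵥ y) = (∑ k, ∑ l, A k l * y k ^ 2) - ∑ k, ∑ l, A k l * (y k * y l) := by
    intro y
    have hdx : ∀ k, (L *ᵥ y) k = d k * y k - ∑ l, A k l * y l := by
      intro k
      simp only [Matrix.mulVec, dotProduct, hLe, sub_mul]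
      rw [Finset.sum_sub_distrib]
      congr 1
      simp [Finset.sum_ite_eq, ite_mul]
    calc y ⬝ᵥ (L *ᵥ y) = ∑ k, (d k * y k ^ 2 - ∑ l, A k l * (y k * y l)) := by
          simp only [dotProduct, hdx]
          refine Finset.sum_congr rfl fun k _ => ?_
          rw [mul_sub, Finset.mul_sum]
          congr 1
          · ring
          · refine Finset.sum_congr rfl fun l _ => ?_; ring
      _ = (∑ k, ∑ l, A k l * y k ^ 2) - ∑ k, ∑ l, A k l * (y k * y l) := by
          rw [Finset.sum_sub_distrib]
          congr 1
          refine Finset.sum_congr rfl fun k _ => ?_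
          rw [hdeg k, Finset.sum_mul]
  have hquad : ∀ y : Fin n → ℝ,
      ∑ k, ∑ l, A k l * (y k - y l) ^ 2 = 2 * (y ⬝ᵥ (L *ᵥ y)) := by
    intro y
    have swap : ∑ k, ∑ l, A k l * y l ^ 2 = ∑ k, ∑ l, A k l * y k ^ 2 := by
      rw [Finset.sum_comm]
      exact Finset.sum_congr rfl fun k _ => Finset.sum_congr rfl fun l _ => by rw [hAsymm]
    have e1 : ∑ k, ∑ l, A k l * (y k - y l) ^ 2
        = (∑ k, ∑ l, A k l * y k ^ 2) + (∑ k, ∑ l, A k l * y l ^ 2)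
          - 2 * ∑ k, ∑ l, A k l * (y k * y l) := by
      rw [← Finset.sum_add_distrib, Finset.mul_sum, ← Finset.sum_sub_distrib]
      refine Finset.sum_congr rfl fun k _ => ?_
      rw [← Finset.sum_add_distrib, Finset.mul_sum, ← Finset.sum_sub_distrib]
      refine Finset.sum_congr rfl fun l _ => ?_
      ring
    rw [e1, swap, e2 y]; ring
  -- kernel of L
  have hker : ∀ x : Fin n → ℝ, L *ᵥ x = 0 → ∀ k l, x k = x l := by
    intro x hx
    have h0 : ∑ k, ∑ l, A k l * (x k - x l) ^ 2 = 0 := by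
      rw [hquad x, hx]; simp
    have hterm : ∀ k l, A k l * (x k - x l) ^ 2 = 0 := by
      have houter := (Finset.sum_eq_zero_iff_of_nonneg (fun k _ =>
        Finset.sum_nonneg fun l _ => mul_nonneg (hnn k l) (sq_nonneg _))).mp h0
      intro k l
      have hinner := (Finset.sum_eq_zero_iff_of_nonneg (fun l _ =>
        mul_nonneg (hnn k l) (sq_nonneg _))).mp (houter k (Finset.mem_univ k))
      exact hinner l (Finset.mem_univ l)
    have hedge : ∀ k l, A k l ≠ 0 → x k = x l := by
      intro k l hA
      have := hterm k l
      rcases mul_eq_zero.mp this with hc | hc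
      · exact absurd hc hA
      · have := pow_eq_zero_iff (n := 2) (by norm_num) |>.mp hc
        linarith [sub_eq_zero.mp this]
    intro k l
    induction hconn k l with
    | refl => rfl
    | tail _ hrel ih => exact ih.trans (hedge _ _ hrel)
  -- surjectivity onto mean-zero vectors
  have hsurj : ∀ w : Fin n → ℝ, (∑ k, w k) = 0 → ∃ x, L *ᵥ x = w := by
    set F := Matrix.mulVecLin L with hF
    set g : (Fin n → ℝ) →ₗ[ℝ] ℝ :=
      { toFun := fun x => ∑ k, x k
        map_add' := by intro a b; simp [Finset.sum_add_distrib]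
        map_smul' := by intro c a; simp [Finset.mul_sum] } with hg
    have hone_ne : vone ≠ 0 := by
      intro hcontra
      have := congrFun hcontra ⟨0, hn⟩
      simp [hvone] at this
    have hkerF : LinearMap.ker F = Submodule.span ℝ {vone} := by
      apply le_antisymm
      · intro x hx
        have hx' : L *ᵥ x = 0 := hx
        have hc := hker x hx'
        rw [Submodule.mem_span_singleton]
        exact ⟨x ⟨0, hn⟩, funext fun k => by simp [hvone, hc k ⟨0, hn⟩]⟩
      · rw [Submodule.span_le, Set.singleton_subset_iff]
        exact honeL
    have hkF1 : Module.finrank ℝ (LinearMap.ker F) = 1 := by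
      rw [hkerF]; exact finrank_span_singleton hone_ne
    have hrn : Module.finrank ℝ (LinearMap.range F) + Module.finrank ℝ (LinearMap.ker F) = n := by
      rw [LinearMap.finrank_range_add_finrank_ker]
      simp [Module.finrank_pi]
    have hgsurj : LinearMap.range g = ⊤ := by
      rw [LinearMap.range_eq_top]
      intro r
      refine ⟨fun _ => r / n, ?_⟩
      show ∑ _k : Fin n, r / n = r
      rw [Finset.sum_const, Finset.card_univ, Fintype.card_fin, nsmul_eq_mul]
      field_simp
    have hrg : Module.finrank ℝ (LinearMap.range g) + Module.finrank ℝ (LinearMap.ker g) = n := by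
      rw [LinearMap.finrank_range_add_finrank_ker]
      simp [Module.finrank_pi]
    have hrg1 : Module.finrank ℝ (LinearMap.range g) = 1 := by
      rw [hgsurj]; simp
    have hle : LinearMap.range F ≤ LinearMap.ker g := by
      rintro _ ⟨x, rfl⟩
      show (∑ k, (L *ᵥ x) k) = 0
      simp only [Matrix.mulVec, dotProduct]
      rw [Finset.sum_comm]
      refine Finset.sum_eq_zero fun j _ => ?_
      rw [← Finset.sum_mul, hcol, zero_mul]
    have heq : LinearMap.range F = LinearMap.ker g :=
      Submodule.eq_of_le_of_finrank_le hle (by omega)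
    intro w hw
    have hwmem : w ∈ LinearMap.ker g := hw
    rw [← heq] at hwmem
    obtain ⟨x, hx⟩ := hwmem
    exact ⟨x, hx⟩
  -- the pseudoinverse
  obtain ⟨p1, p2, p3, p4⟩ := mpinv_penrose hLherm
  set N : Matrix (Fin n) (Fin n) ℝ := mpinv L with hNdef
  have hLN : L * N = Nᵀ * L := by
    conv_lhs => rw [← p3]
    rw [Matrix.transpose_mul, hLsym]
  have hNL : N * L = L * Nᵀ := by
    conv_lhs => rw [← p4]
    rw [Matrix.transpose_mul, hLsym]
  have hNN : N = N * Nᵀ * L := by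
    calc N = N * L * N := p2.symm
      _ = N * (L * N) := by rw [Matrix.mul_assoc]
      _ = N * (Nᵀ * L) := by rw [hLN]
      _ = N * Nᵀ * L := by rw [Matrix.mul_assoc]
  have hNN' : N = L * (Nᵀ * N) := by
    calc N = N * L * N := p2.symm
      _ = L * Nᵀ * N := by rw [hNL]
      _ = L * (Nᵀ * N) := by rw [Matrix.mul_assoc]
  have hNone : N *ᵥ vone = 0 := by
    conv_lhs => rw [hNN]
    rw [← Matrix.mulVec_mulVec, honeL, Matrix.mulVec_zero]
  have honeN : vone ᵥ* N = 0 := by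
    conv_lhs => rw [hNN']
    rw [← Matrix.vecMul_vecMul, hLone, Matrix.zero_vecMul]
  have hrowN : ∀ k, ∑ l, N k l = 0 := by
    intro k
    have := congrFun hNone k
    simpa [Matrix.mulVec, dotProduct, hvone] using this
  have hcolN : ∀ l, ∑ k, N k l = 0 := by
    intro l
    have := congrFun honeN l
    simpa [Matrix.vecMul, dotProduct, hvone] using this
  -- the vector v
  set v : Fin n → ℝ := fun k => (if k = i then 1 else 0) - (n : ℝ)⁻¹ with hv
  have hvsum : ∑ k, v k = 0 := by
    simp only [hv]
    rw [Finset.sum_sub_distrib]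
    simp [Finset.sum_ite_eq', Finset.card_univ, mul_inv_cancel₀ (ne_of_gt hnR)]
  set u : Fin n → ℝ := N *ᵥ v with hu
  have huk : ∀ k, u k = N k i := by
    intro k
    simp only [hu, Matrix.mulVec, dotProduct, hv, mul_sub]
    rw [Finset.sum_sub_distrib]
    have h1 : ∑ l, N k l * (if l = i then (1:ℝ) else 0) = N k i := by simp
    have h2 : ∑ l, N k l * (n:ℝ)⁻¹ = 0 := by rw [← Finset.sum_mul, hrowN, zero_mul]
    rw [h1, h2, sub_zero]
  set t : ℝ := v ⬝ᵥ u with ht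
  have htN : t = N i i := by
    simp only [ht, dotProduct, hv, sub_mul]
    rw [Finset.sum_sub_distrib]
    have h1 : ∑ k, (if k = i then (1:ℝ) else 0) * u k = u i := by simp
    have h2 : ∑ k, (n:ℝ)⁻¹ * u k = 0 := by
      rw [← Finset.mul_sum]
      have : ∑ k, u k = 0 := by
        simp only [huk]; exact hcolN i
      rw [this, mul_zero]
    rw [h1, h2, sub_zero, huk]
  obtain ⟨x0, hx0⟩ := hsurj v hvsum
  have hLu : L *ᵥ u = v := by
    rw [hu, ← hx0, Matrix.mulVec_mulVec, Matrix.mulVec_mulVec, p1]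
  -- center u
  set Sd : ℝ := ∑ k, d k with hSd
  have hSdpos : 0 < Sd := Finset.sum_pos (fun k _ => hdpos k) ⟨i, Finset.mem_univ i⟩
  set c : ℝ := (∑ k, d k * u k) / Sd with hc
  set z : Fin n → ℝ := fun k => u k - c with hz
  have hzdef : z = u - c • vone := by
    funext k; simp [hz, hvone]
  have hLz : L *ᵥ z = v := by
    rw [hzdef, Matrix.mulVec_sub, Matrix.mulVec_smul, honeL, smul_zero, sub_zero, hLu]
  have hdz : ∑ k, d k * z k = 0 := by
    simp only [hz, mul_sub]
    rw [Finset.sum_sub_distrib, ← Finset.sum_mul, ← hSd, hc]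
    field_simp
    ring
  have hzv : z ⬝ᵥ v = t := by
    simp only [dotProduct, hz, sub_mul]
    rw [Finset.sum_sub_distrib, ← Finset.mul_sum, hvsum, mul_zero, sub_zero, ht]
    simp only [dotProduct]
    exact Finset.sum_congr rfl fun k _ => mul_comm _ _
  have hzLz : z ⬝ᵥ (L *ᵥ z) = t := by rw [hLz, hzv]
  -- the bound t ≤ lam2⁻¹ * R
  set R : ℝ := ∑ k, (v k) ^ 2 * (d k)⁻¹ with hR
  have hRnonneg : 0 ≤ R :=
    Finset.sum_nonneg fun k _ => mul_nonneg (sq_nonneg _) (inv_pos.mpr (hdpos k)).le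
  have httR : t ≤ lam2⁻¹ * R := by
    by_cases hzz : z = 0
    · have hv0 : v = 0 := by rw [← hLz, hzz, Matrix.mulVec_zero]
      have ht0 : t = 0 := by rw [ht, hv0, zero_dotProduct]
      rw [ht0]
      exact mul_nonneg (inv_pos.mpr hlampos).le hRnonneg
    · set x : Fin n → ℝ := fun k => Real.sqrt (d k) * z k with hx
      have hsqrtpos : ∀ k, 0 < Real.sqrt (d k) := fun k => Real.sqrt_pos.mpr (hdpos k)
      have hsq : ∀ k, Real.sqrt (d k) * Real.sqrt (d k) = d k :=
        fun k => Real.mul_self_sqrt (hdpos k).le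
      have hxne : x ≠ 0 := by
        intro hcontra
        apply hzz
        funext k
        have := congrFun hcontra k
        simp only [hx, Pi.zero_apply] at this
        rcases mul_eq_zero.mp this with hc' | hc'
        · exact absurd hc' (ne_of_gt (hsqrtpos k))
        · exact hc'
      have hxd : (fun k => Real.sqrt (d k)) ⬝ᵥ x = 0 := by
        simp only [dotProduct, hx]
        calc ∑ k, Real.sqrt (d k) * (Real.sqrt (d k) * z k)
            = ∑ k, d k * z k := by
              refine Finset.sum_congr rfl fun k _ => ?_
              rw [← mul_assoc, hsq]
          _ = 0 := hdz
      have hq : x ⬝ᵥ x = ∑ k, d k * z k ^ 2 := by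
        simp only [dotProduct, hx]
        refine Finset.sum_congr rfl fun k _ => ?_
        calc Real.sqrt (d k) * z k * (Real.sqrt (d k) * z k)
            = Real.sqrt (d k) * Real.sqrt (d k) * (z k * z k) := by ring
          _ = d k * z k ^ 2 := by rw [hsq]; ring
      have hqpos : 0 < ∑ k, d k * z k ^ 2 := by
        obtain ⟨k, hk⟩ := Function.ne_iff.mp hzz
        refine Finset.sum_pos' (fun l _ => mul_nonneg (hdpos l).le (sq_nonneg _)) ⟨k, Finset.mem_univ k, ?_⟩
        have : 0 < z k ^ 2 := pow_pos (abs_pos.mpr hk) 2 |>.trans_eq (by rw [sq_abs]) |>.trans_le (le_refl _)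
        exact mul_pos (hdpos k) (by positivity)
      have hxSx : x ⬝ᵥ (S *ᵥ x) = t := by
        rw [hS, Matrix.sub_mulVec, dotProduct_sub, Matrix.one_mulVec]
        have hBx : x ⬝ᵥ ((dhalfInv d * A * dhalfInv d) *ᵥ x) = ∑ k, ∑ l, A k l * (z k * z l) := by
          simp only [dotProduct, Matrix.mulVec, dhalfInv, Matrix.mul_diagonal,
            Matrix.diagonal_mul, hx]
          refine Finset.sum_congr rfl fun k _ => ?_
          rw [Finset.mul_sum]
          refine Finset.sum_congr rfl fun l _ => ?_
          have hk := ne_of_gt (hsqrtpos k)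
          have hl := ne_of_gt (hsqrtpos l)
          field_simp
        rw [hBx, hq]
        have := e2 z
        rw [hzLz] at this
        have hQ : ∑ k, ∑ l, A k l * z k ^ 2 = ∑ k, d k * z k ^ 2 := by
          refine Finset.sum_congr rfl fun k _ => ?_
          rw [hdeg k, Finset.sum_mul]
        linarith
      have hmem : t / (x ⬝ᵥ x) ∈ {r : ℝ | ∃ x : Fin n → ℝ, x ≠ 0 ∧
          (fun i => Real.sqrt (d i)) ⬝ᵥ x = 0 ∧ r = (x ⬝ᵥ (S *ᵥ x)) / (x ⬝ᵥ x)} :=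
        ⟨x, hxne, hxd, by rw [hxSx]⟩
      have hlow : lam2 ≤ t / (x ⬝ᵥ x) := hlam.2 hmem
      have hxx : x ⬝ᵥ x = ∑ k, d k * z k ^ 2 := hq
      have hqpos' : 0 < x ⬝ᵥ x := by rw [hxx]; exact hqpos
      have hqt : lam2 * (x ⬝ᵥ x) ≤ t := (le_div_iff₀ hqpos').mp hlow
      have htpos : 0 < t := lt_of_lt_of_le (mul_pos hlampos hqpos') hqt
      -- Cauchy-Schwarz
      have hcs : t ^ 2 ≤ (x ⬝ᵥ x) * R := by
        have := Finset.sum_mul_sq_le_sq_mul_sq Finset.univ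
          (fun k => Real.sqrt (d k) * z k) (fun k => v k * (Real.sqrt (d k))⁻¹)
        have hL1 : ∑ k, (Real.sqrt (d k) * z k) * (v k * (Real.sqrt (d k))⁻¹) = t := by
          rw [← hzv]
          simp only [dotProduct]
          refine Finset.sum_congr rfl fun k _ => ?_
          have hk := ne_of_gt (hsqrtpos k)
          field_simp
        have hL2 : ∑ k, (Real.sqrt (d k) * z k) ^ 2 = x ⬝ᵥ x := by
          rw [hxx]
          refine Finset.sum_congr rfl fun k _ => ?_
          rw [mul_pow, sq, hsq]
        have hL3 : ∑ k, (v k * (Real.sqrt (d k))⁻¹) ^ 2 = R := by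
          rw [hR]
          refine Finset.sum_congr rfl fun k _ => ?_
          rw [mul_pow, inv_pow, Real.sq_sqrt (hdpos k).le]
        rw [hL1, hL2, hL3] at this
        exact this
      have hqle : x ⬝ᵥ x ≤ t / lam2 := by
        rw [le_div_iff₀ hlampos]
        linarith [hqt]
      have : t ^ 2 ≤ (t / lam2) * R :=
        le_trans hcs (mul_le_mul_of_nonneg_right hqle hRnonneg)
      have h2 : t * t ≤ t * (lam2⁻¹ * R) := by
        calc t * t = t ^ 2 := by ring
          _ ≤ (t / lam2) * R := this
          _ = t * (lam2⁻¹ * R) := by ring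
      exact le_of_mul_le_mul_left h2 htpos
  -- bound R
  have hRb : R ≤ (d i)⁻¹ + (n:ℝ)⁻¹ * (n:ℝ)⁻¹ * T := by
    have hterm : ∀ k, (v k) ^ 2 * (d k)⁻¹ ≤
        (if k = i then (d i)⁻¹ else 0) + (n:ℝ)⁻¹ * (n:ℝ)⁻¹ * (d k)⁻¹ := by
      intro k
      by_cases hk : k = i
      · subst hk
        simp only [hv, eq_self_iff_true, if_true]
        have hdk : 0 < (d k)⁻¹ := inv_pos.mpr (hdpos k)
        have hna : 0 ≤ (n:ℝ)⁻¹ := by positivity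
        have hexp : ((1:ℝ) - (n:ℝ)⁻¹) ^ 2 * (d k)⁻¹
            = (d k)⁻¹ + (n:ℝ)⁻¹ * (n:ℝ)⁻¹ * (d k)⁻¹ - 2 * ((n:ℝ)⁻¹ * (d k)⁻¹) := by ring
        rw [hexp]
        linarith [mul_nonneg hna hdk.le]
      · simp only [hv, if_neg hk]
        have : ((0:ℝ) - (n:ℝ)⁻¹) ^ 2 * (d k)⁻¹ = (n:ℝ)⁻¹ * (n:ℝ)⁻¹ * (d k)⁻¹ := by ring
        rw [this, zero_add]
    calc R ≤ ∑ k, ((if k = i then (d i)⁻¹ else 0) + (n:ℝ)⁻¹ * (n:ℝ)⁻¹ * (d k)⁻¹) :=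
          Finset.sum_le_sum fun k _ => hterm k
      _ = (d i)⁻¹ + (n:ℝ)⁻¹ * (n:ℝ)⁻¹ * T := by
          rw [Finset.sum_add_distrib, ← Finset.mul_sum, ← hT]
          simp [Finset.sum_ite_eq']
  -- final assembly
  have hfinal : t ≤ lam2⁻¹ * ((d i)⁻¹ + (n:ℝ)⁻¹ * (n:ℝ)⁻¹ * T) :=
    le_trans httR (mul_le_mul_of_nonneg_left hRb (inv_pos.mpr hlampos).le)
  have hRHS : σ2 / (lam2 * d i) * (1 + d i / (n * h)) =
      σ2 * (lam2⁻¹ * ((d i)⁻¹ + (n:ℝ)⁻¹ * (n:ℝ)⁻¹ * T)) := by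
    rw [hh]
    have h1 : lam2 ≠ 0 := ne_of_gt hlampos
    have h2 : d i ≠ 0 := ne_of_gt (hdpos i)
    have h3 : (n:ℝ) ≠ 0 := ne_of_gt hnR
    have h4 : T ≠ 0 := ne_of_gt hTpos
    field_simp
  rw [hRHS, ← htN]
  exact mul_le_mul_of_nonneg_left hfinal hσ
end

section
/- Cauchy–Schwarz degree inequality: for a symmetric nonnegative matrix A with row sums d_j = Σ_k A_{jk} > 0, one has Σ_{j,k} A_{jk}/(d_j d_k) ≤ Σ_j 1/d_j. -/
open Matrix BigOperators

/-- Cauchy–Schwarz degree inequality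
`Σⱼₖ Aⱼₖ/(dⱼdₖ) ≤ Σⱼ 1/dⱼ`. -/
theorem stmt17 {n : ℕ} (A : Matrix (Fin n) (Fin n) ℝ) (hsym : Aᵀ = A)
    (hnn : ∀ i j, 0 ≤ A i j)
    (d : Fin n → ℝ) (hdeg : ∀ i, d i = ∑ j, A i j) (hdpos : ∀ i, 0 < d i) :
    ∑ j, ∑ k, A j k / (d j * d k) ≤ ∑ j, (d j)⁻¹ := by
  have hsym' : ∀ j k, A k j = A j k := fun j k => by
    have := congrFun (congrFun hsym j) k; simpa [Matrix.transpose_apply] using this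
  have step1 : ∑ j, ∑ k, A j k / (d j * d k)
      ≤ ∑ j, ∑ k, A j k * (1 / (2 * (d j)^2) + 1 / (2 * (d k)^2)) := by
    apply Finset.sum_le_sum; intro j _
    apply Finset.sum_le_sum; intro k _
    have hj := hdpos j; have hk := hdpos k
    rw [div_eq_mul_one_div]
    apply mul_le_mul_of_nonneg_left _ (hnn j k)
    rw [div_add_div _ _ (by positivity : (2:ℝ)*(d j)^2 ≠ 0) (by positivity : (2:ℝ)*(d k)^2 ≠ 0),
      div_le_div_iff₀ (by positivity) (by positivity)]
    nlinarith [sq_nonneg (d j - d k), mul_pos hj hk, sq_nonneg (d j * d k - d j * d k)]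
  refine step1.trans (le_of_eq ?_)
  have swap : ∑ j, ∑ k, A j k * (1 / (2 * (d k)^2)) = ∑ j, ∑ k, A j k * (1 / (2 * (d j)^2)) := by
    rw [Finset.sum_comm]
    refine Finset.sum_congr rfl fun j _ => Finset.sum_congr rfl fun k _ => ?_
    rw [hsym' j k]
  calc ∑ j, ∑ k, A j k * (1 / (2 * (d j)^2) + 1 / (2 * (d k)^2))
      = ∑ j, ∑ k, (A j k * (1 / (2 * (d j)^2)) + A j k * (1 / (2 * (d k)^2))) := by
        refine Finset.sum_congr rfl fun j _ => Finset.sum_congr rfl fun k _ => ?_; ring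
    _ = ∑ j, ∑ k, A j k * (1 / (2 * (d j)^2)) + ∑ j, ∑ k, A j k * (1 / (2 * (d k)^2)) := by
        simp [Finset.sum_add_distrib]
    _ = 2 * ∑ j, ∑ k, A j k * (1 / (2 * (d j)^2)) := by rw [swap]; ring
    _ = ∑ j, (d j)⁻¹ := by
        rw [Finset.mul_sum]
        refine Finset.sum_congr rfl fun j _ => ?_
        rw [← Finset.sum_mul, ← hdeg j]
        have hj := hdpos j
        field_simp
end
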